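/- arXiv:1310.7770 — 5 statements merged into one kernel-verified Lean document; each statement's English description precedes it below -/
import Mathlib

section
/- If $\mu\in\mathcal{M}_1^{s}(\mathcal{T}^2)$ is a probability measure with equal marginals whose support is exactly the edge set of a simple cycle $\gamma$, then $\mu = \mu_\gamma$, the uniform measure on the edges of $\gamma$. -/
/-- Probability measure on `T²` with equal marginals. -/
def memM1s {T : Type*} [Fintype T] (μ : T × T → ℝ) : Prop :=
  (∀ p, 0 ≤ μ p) ∧ (∑ p : T × T, μ p = 1) ∧
    ∀ i : T, ∑ j, μ (i, j) = ∑ j, μ (j, i)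

/-- The uniform measure on the edges of a cycle `γ` of length `l + 1`,
given by the vertices `γ 0, γ 1, …, γ l` (addition in `Fin (l+1)` is cyclic). -/
noncomputable def cycleMeasure {T : Type*} [Fintype T] [DecidableEq T] {l : ℕ}
    (γ : Fin (l + 1) → T) : T × T → ℝ :=
  fun p => if ∃ m, p = (γ m, γ (m + 1)) then ((l : ℝ) + 1)⁻¹ else 0


/-- If the support of a probability measure with equal marginals is exactly the edge
set of a simple cycle `γ`, then the measure is the uniform measure on the edges of `γ`. -/
theorem stmt4 {T : Type*} [Fintype T] [DecidableEq T]
    (μ : T × T → ℝ) (h : memM1s μ) {l : ℕ}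
    (γ : Fin (l + 1) → T) (hinj : Function.Injective γ)
    (hsupp : ∀ p : T × T, 0 < μ p ↔ ∃ m, p = (γ m, γ (m + 1))) :
    μ = cycleMeasure γ := by
  obtain ⟨hpos, hsum, hmarg⟩ := h
  set f : Fin (l + 1) → ℝ := fun m => μ (γ m, γ (m + 1)) with hf
  have hzero : ∀ p : T × T, (¬ ∃ m, p = (γ m, γ (m + 1))) → μ p = 0 := by
    intro p hp
    have h1 := hpos p
    have h2 := mt (hsupp p).mp hp
    linarith [lt_or_eq_of_le h1]
    -- fallback handled below if needed
  -- step: f (m+1) = f m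
  have hstep : ∀ m : Fin (l + 1), f (m + 1) = f m := by
    intro m
    have hL : ∑ j, μ (γ (m + 1), j) = f (m + 1) := by
      apply Finset.sum_eq_single (γ (m + 1 + 1))
      · intro j _ hj
        apply hzero
        rintro ⟨k, hk⟩
        have h1 : γ (m + 1) = γ k := congrArg Prod.fst hk
        have h2 : j = γ (k + 1) := congrArg Prod.snd hk
        exact hj (by rw [h2, ← hinj h1])
      · intro habs; exact absurd (Finset.mem_univ _) habs
    have hR : ∑ j, μ (j, γ (m + 1)) = f m := by
      apply Finset.sum_eq_single (γ m)
      · intro j _ hj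
        apply hzero
        rintro ⟨k, hk⟩
        have h1 : j = γ k := congrArg Prod.fst hk
        have h2 : γ (m + 1) = γ (k + 1) := congrArg Prod.snd hk
        have : m = k := by
          have := hinj h2
          exact add_right_cancel this
        exact hj (by rw [h1, ← this])
      · intro habs; exact absurd (Finset.mem_univ _) habs
    have := hmarg (γ (m + 1))
    rw [hL, hR] at this
    exact this
  -- f is constant
  open Fin.NatCast in
  have hconstN : ∀ n : ℕ, f ((n : Fin (l + 1))) = f 0 := by
    intro n
    induction n with
    | zero => simp
    | succ k ih =>
      have : ((k + 1 : ℕ) : Fin (l + 1)) = (k : Fin (l + 1)) + 1 := by push_cast; ring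
      rw [this, hstep, ih]
  have hconst : ∀ m : Fin (l + 1), f m = f 0 := by
    intro m
    have := hconstN m.val
    rwa [Fin.cast_val_eq_self] at this
  -- total mass
  have hedgeinj : Function.Injective (fun m : Fin (l + 1) => (γ m, γ (m + 1))) := by
    intro a b hab
    exact hinj (congrArg Prod.fst hab)
  have hsum2 : ∑ p : T × T, μ p = ∑ m : Fin (l + 1), f m := by
    have h1 : ∑ p ∈ Finset.univ.image (fun m : Fin (l + 1) => (γ m, γ (m + 1))), μ p
        = ∑ m : Fin (l + 1), f m :=
      Finset.sum_image (fun a _ b _ hab => hedgeinj hab)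
    rw [← h1]
    symm
    apply Finset.sum_subset (Finset.subset_univ _)
    intro p _ hp
    apply hzero
    rintro ⟨m, rfl⟩
    exact hp (Finset.mem_image_of_mem _ (Finset.mem_univ m))
  have hf0 : f 0 = ((l : ℝ) + 1)⁻¹ := by
    have : (l + 1 : ℝ) * f 0 = 1 := by
      have := hsum
      rw [hsum2] at this
      rw [Finset.sum_congr rfl (fun m _ => hconst m), Finset.sum_const,
        Finset.card_univ, Fintype.card_fin, nsmul_eq_mul] at this
      push_cast at this ⊢
      linarith
    field_simp at this ⊢
    linarith
  funext p
  by_cases hp : ∃ m, p = (γ m, γ (m + 1))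
  · obtain ⟨m, rfl⟩ := hp
    have : μ (γ m, γ (m + 1)) = f m := rfl
    rw [this, hconst m, hf0, cycleMeasure, if_pos ⟨m, rfl⟩]
  · rw [hzero p hp, cycleMeasure, if_neg hp]
end

section
/- The set of extreme points of the convex set $\mathcal{M}_1^{s}(\mathcal{T}^2)$ of probability measures on $\mathcal{T}^2$ with equal marginals is exactly $\{\mu_\gamma : \gamma \text{ a simple cycle on } \mathcal{T}\}$, where $\mu_\gamma$ is the uniform measure on the edges of $\gamma$. -/
section cyc
variable {T : Type*} [Fintype T] [DecidableEq T] {l : ℕ} {γ : Fin (l + 1) → T}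

lemma cm_edge (m : Fin (l + 1)) : cycleMeasure γ (γ m, γ (m + 1)) = ((l : ℝ) + 1)⁻¹ := by
  simp only [cycleMeasure]
  exact if_pos ⟨m, rfl⟩

lemma cm_not_edge {p : T × T} (hp : ¬ ∃ m : Fin (l + 1), p = (γ m, γ (m + 1))) :
    cycleMeasure γ p = 0 := by
  simp only [cycleMeasure]
  exact if_neg hp

lemma sum_fst (hγ : Function.Injective γ) {x : T × T → ℝ}
    (hsupp : ∀ p : T × T, (¬ ∃ m : Fin (l + 1), p = (γ m, γ (m + 1))) → x p = 0)
    (m : Fin (l + 1)) : ∑ j, x (γ m, j) = x (γ m, γ (m + 1)) := by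
  refine Finset.sum_eq_single_of_mem _ (Finset.mem_univ _) (fun j _ hj => ?_)
  refine hsupp _ (fun ⟨m', hm'⟩ => hj ?_)
  have h1 : γ m = γ m' := congrArg Prod.fst hm'
  have h2 : j = γ (m' + 1) := congrArg Prod.snd hm'
  rw [h2, hγ h1]

lemma sum_snd (hγ : Function.Injective γ) {x : T × T → ℝ}
    (hsupp : ∀ p : T × T, (¬ ∃ m : Fin (l + 1), p = (γ m, γ (m + 1))) → x p = 0)
    (m : Fin (l + 1)) : ∑ j, x (j, γ m) = x (γ (m - 1), γ m) := by
  refine Finset.sum_eq_single_of_mem _ (Finset.mem_univ _) (fun j _ hj => ?_)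
  refine hsupp _ (fun ⟨m', hm'⟩ => hj ?_)
  have h1 : γ m = γ (m' + 1) := congrArg Prod.snd hm'
  have h2 : j = γ m' := congrArg Prod.fst hm'
  have h3 : m' = m - 1 := eq_sub_of_add_eq (hγ h1).symm
  rw [h2, h3]
end cyc

section cyc2
set_option linter.unusedSectionVars false
variable {T : Type*} [Fintype T] [DecidableEq T] {l : ℕ} {γ : Fin (l + 1) → T}

open Fin.NatCast Fin.CommRing in
lemma const_edges (hγ : Function.Injective γ) {x : T × T → ℝ}
    (hmarg : ∀ i : T, ∑ j, x (i, j) = ∑ j, x (j, i))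
    (hsupp : ∀ p : T × T, (¬ ∃ m : Fin (l + 1), p = (γ m, γ (m + 1))) → x p = 0) :
    ∀ m : Fin (l + 1), x (γ m, γ (m + 1)) = x (γ 0, γ (0 + 1)) := by
  have step : ∀ m : Fin (l + 1), x (γ m, γ (m + 1)) = x (γ (m - 1), γ m) := fun m => by
    rw [← sum_fst hγ hsupp m, hmarg, sum_snd hγ hsupp m]
  have step' : ∀ m : Fin (l + 1), x (γ (m + 1), γ (m + 1 + 1)) = x (γ m, γ (m + 1)) := fun m => by
    have h := step (m + 1)
    rwa [add_sub_cancel_right] at h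
  have key : ∀ k : ℕ, x (γ (k : Fin (l + 1)), γ ((k : Fin (l + 1)) + 1)) = x (γ 0, γ (0 + 1)) := by
    intro k
    induction k with
    | zero => norm_num
    | succ n ih =>
      have hcast : ((n + 1 : ℕ) : Fin (l + 1)) = (n : Fin (l + 1)) + 1 := by push_cast; ring
      rw [hcast, step' n, ih]
  intro m
  have h := key m.val
  rwa [Fin.cast_val_eq_self] at h

lemma sum_over_edges (hγ : Function.Injective γ) {x : T × T → ℝ}
    (hsupp : ∀ p : T × T, (¬ ∃ m : Fin (l + 1), p = (γ m, γ (m + 1))) → x p = 0) :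
    ∑ p : T × T, x p = ∑ m : Fin (l + 1), x (γ m, γ (m + 1)) := by
  classical
  rw [← Finset.sum_image (f := x) (g := fun m : Fin (l + 1) => (γ m, γ (m + 1)))
      (fun m _ m' _ h => hγ (congrArg Prod.fst h))]
  refine (Finset.sum_subset (Finset.subset_univ _) ?_).symm
  intro p _ hp
  refine hsupp p (fun ⟨m, hm⟩ => hp ?_)
  exact Finset.mem_image.2 ⟨m, Finset.mem_univ _, hm.symm⟩

lemma cycleMeasure_memM1s (hγ : Function.Injective γ) : memM1s (cycleMeasure γ) := by
  have hsupp : ∀ p : T × T, (¬ ∃ m : Fin (l + 1), p = (γ m, γ (m + 1))) →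
      cycleMeasure γ p = 0 := fun p hp => cm_not_edge hp
  have hl : (0 : ℝ) < (l : ℝ) + 1 := by positivity
  refine ⟨fun p => ?_, ?_, fun i => ?_⟩
  · simp only [cycleMeasure]
    split <;> positivity
  · rw [sum_over_edges hγ hsupp]
    simp only [cm_edge, Finset.sum_const, Finset.card_univ, Fintype.card_fin, nsmul_eq_mul]
    push_cast
    field_simp
  · by_cases hi : ∃ m, γ m = i
    · obtain ⟨m, rfl⟩ := hi
      rw [sum_fst hγ hsupp m, sum_snd hγ hsupp m, cm_edge m]
      have h1 : γ m = γ (m - 1 + 1) := by rw [sub_add_cancel]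
      rw [h1, cm_edge (m - 1)]
    · have h1 : ∀ j, cycleMeasure γ (i, j) = 0 := fun j =>
        hsupp _ (fun ⟨m', hm'⟩ => hi ⟨m', (congrArg Prod.fst hm').symm⟩)
      have h2 : ∀ j, cycleMeasure γ (j, i) = 0 := fun j =>
        hsupp _ (fun ⟨m', hm'⟩ => hi ⟨m' + 1, (congrArg Prod.snd hm').symm⟩)
      simp [h1, h2]

lemma eq_cycleMeasure (hγ : Function.Injective γ) {x : T × T → ℝ} (hx : memM1s x)
    (hsupp : ∀ p : T × T, (¬ ∃ m : Fin (l + 1), p = (γ m, γ (m + 1))) → x p = 0) :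
    x = cycleMeasure γ := by
  obtain ⟨hpos, hsum, hmarg⟩ := hx
  have hconst := const_edges hγ hmarg hsupp
  have hl : (0 : ℝ) < (l : ℝ) + 1 := by positivity
  have hval : x (γ 0, γ (0 + 1)) = ((l : ℝ) + 1)⁻¹ := by
    have h1 : ∑ m : Fin (l + 1), x (γ m, γ (m + 1)) = ((l : ℝ) + 1) * x (γ 0, γ (0 + 1)) := by
      rw [Finset.sum_congr rfl fun m _ => hconst m]
      simp only [Finset.sum_const, Finset.card_univ, Fintype.card_fin, nsmul_eq_mul]
      push_cast; ring
    have h2 : ((l : ℝ) + 1) * x (γ 0, γ (0 + 1)) = 1 := by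
      rw [← h1, ← sum_over_edges hγ hsupp, hsum]
    exact eq_inv_of_mul_eq_one_left (by linarith [h2])
  funext p
  by_cases hp : ∃ m : Fin (l + 1), p = (γ m, γ (m + 1))
  · obtain ⟨m, rfl⟩ := hp
    rw [cm_edge m, hconst m, hval]
  · rw [hsupp p hp, cm_not_edge hp]
end cyc2

section walk
set_option linter.unusedSectionVars false
variable {T : Type*} [Fintype T] [DecidableEq T]

lemma exists_cycle {μ : T × T → ℝ} (hμ : memM1s μ) :
    ∃ (l : ℕ) (γ : Fin (l + 1) → T), Function.Injective γ ∧
      ∀ m : Fin (l + 1), 0 < μ (γ m, γ (m + 1)) := by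
  classical
  obtain ⟨hpos, hsum, hmarg⟩ := hμ
  have hex : ∃ p : T × T, 0 < μ p := by
    by_contra h
    push_neg at h
    have h0 : ∀ p : T × T, μ p = 0 := fun p => le_antisymm (h p) (hpos p)
    simp [h0] at hsum
  obtain ⟨p0, hp0⟩ := hex
  set P : T → Prop := fun i => ∃ j, 0 < μ (i, j) with hP
  have next : ∀ i, P i → ∃ j, 0 < μ (i, j) ∧ P j := by
    rintro i ⟨j, hj⟩
    refine ⟨j, hj, ?_⟩
    have h1 : 0 < ∑ k, μ (k, j) :=
      lt_of_lt_of_le hj (Finset.single_le_sum (f := fun k => μ (k, j))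
        (fun k _ => hpos _) (Finset.mem_univ i))
    rw [← hmarg j] at h1
    by_contra h
    simp only [hP, not_exists, not_lt] at h
    have h0 : ∀ k, μ (j, k) = 0 := fun k => le_antisymm (h k) (hpos _)
    simp [h0] at h1
  have hP0 : P p0.1 := ⟨p0.2, hp0⟩
  let step : {i // P i} → {i // P i} := fun s => ⟨(next s.1 s.2).choose, (next s.1 s.2).choose_spec.2⟩
  have hstep : ∀ s : {i // P i}, 0 < μ (s.1, (step s).1) := fun s => (next s.1 s.2).choose_spec.1
  let v : ℕ → T := fun k => (step^[k] ⟨p0.1, hP0⟩).1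
  have hv : ∀ k, 0 < μ (v k, v (k + 1)) := by
    intro k
    have h : step^[k + 1] ⟨p0.1, hP0⟩ = step (step^[k] ⟨p0.1, hP0⟩) :=
      Function.iterate_succ_apply' step k _
    show 0 < μ ((step^[k] ⟨p0.1, hP0⟩).1, (step^[k + 1] ⟨p0.1, hP0⟩).1)
    rw [h]
    exact hstep _
  have hQex : ∃ b : ℕ, ∃ a, a < b ∧ v a = v b := by
    have hni : ¬ Function.Injective (fun k : Fin (Fintype.card T + 1) => v k) := by
      intro hinj
      have hc := Fintype.card_le_of_injective _ hinj
      simp at hc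
    obtain ⟨a, b, hab, hne⟩ := Function.not_injective_iff.1 hni
    rcases Nat.lt_or_ge a.val b.val with h | h
    · exact ⟨b.val, a.val, h, hab⟩
    · have h' : b.val < a.val := lt_of_le_of_ne h (fun he => hne (Fin.ext he.symm))
      exact ⟨a.val, b.val, h', hab.symm⟩
  set Q : ℕ → Prop := fun b => ∃ a, a < b ∧ v a = v b with hQ
  set b := Nat.find hQex with hb
  obtain ⟨a, hab, hva⟩ := Nat.find_spec hQex
  set l := b - a - 1 with hldef
  have hl : l + 1 = b - a := by omega
  refine ⟨l, fun m => v (a + m.val), ?_, ?_⟩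
  · intro m m' h
    rcases lt_trichotomy m.val m'.val with hlt | heq | hlt
    · exfalso
      have hlt2 : a + m'.val < b := by have := m'.isLt; omega
      exact Nat.find_min hQex hlt2 ⟨a + m.val, by omega, h⟩
    · exact Fin.ext heq
    · exfalso
      have hlt2 : a + m.val < b := by have := m.isLt; omega
      exact Nat.find_min hQex hlt2 ⟨a + m'.val, by omega, h.symm⟩
  · intro m
    by_cases hm : m.val < l
    · have h1 : (m + 1).val = m.val + 1 := by
        have : m < Fin.last l := by
          rw [Fin.lt_iff_val_lt_val]
          simpa using hm
        exact Fin.val_add_one_of_lt this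
      simp only [h1]
      have := hv (a + m.val)
      simpa [Nat.add_assoc] using this
    · have hm' : m.val = l := by have := m.isLt; omega
      have hmlast : m = Fin.last l := Fin.ext hm'
      have h1 : m + 1 = 0 := by rw [hmlast]; exact Fin.last_add_one l
      simp only [h1, hm']
      have hb2 : a + l + 1 = b := by omega
      have h := hv (a + l)
      rw [hb2, ← hva] at h
      simpa using h
end walk



/-- The extreme points of the convex set of probability measures on `T²` with equal
marginals are exactly the uniform measures on the edges of simple cycles. -/
theorem stmt5 {T : Type*} [Fintype T] [DecidableEq T] :
    Set.extremePoints ℝ {μ : T × T → ℝ | memM1s μ} =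
      {μ : T × T → ℝ | ∃ l : ℕ, ∃ γ : Fin (l + 1) → T,
        Function.Injective γ ∧ μ = cycleMeasure γ} := by
  ext μ
  rw [mem_extremePoints]
  simp only [Set.mem_setOf_eq]
  constructor
  · rintro ⟨hμ, hext⟩
    obtain ⟨l, γ, hγ, hedge⟩ := exists_cycle hμ
    refine ⟨l, γ, hγ, ?_⟩
    have hνmem : memM1s (cycleMeasure γ) := cycleMeasure_memM1s hγ
    obtain ⟨m₀, -, hm₀⟩ := Finset.exists_min_image Finset.univ
      (fun m : Fin (l + 1) => μ (γ m, γ (m + 1))) ⟨0, Finset.mem_univ 0⟩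
    set c := μ (γ m₀, γ (m₀ + 1)) with hc
    have hc0 : 0 < c := hedge m₀
    have hl1 : (0 : ℝ) < (l : ℝ) + 1 := by positivity
    set ε : ℝ := min (1 / 2) (((l : ℝ) + 1) * c) with hε
    have hε0 : 0 < ε := lt_min (by norm_num) (by positivity)
    have hε1 : ε < 1 := lt_of_le_of_lt (min_le_left _ _) (by norm_num)
    have h1ε : (0 : ℝ) < 1 - ε := by linarith
    have hεν : ∀ p, ε * cycleMeasure γ p ≤ μ p := by
      intro p
      by_cases hp : ∃ m : Fin (l + 1), p = (γ m, γ (m + 1))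
      · obtain ⟨m, rfl⟩ := hp
        rw [cm_edge m]
        have h1 : ε ≤ ((l : ℝ) + 1) * c := min_le_right _ _
        have h2 : c ≤ μ (γ m, γ (m + 1)) := hm₀ m (Finset.mem_univ m)
        calc ε * ((l : ℝ) + 1)⁻¹ ≤ (((l : ℝ) + 1) * c) * ((l : ℝ) + 1)⁻¹ :=
              mul_le_mul_of_nonneg_right h1 (by positivity)
          _ = c := by field_simp
          _ ≤ _ := h2
      · rw [cm_not_edge hp, mul_zero]
        exact hμ.1 p
    set x : T × T → ℝ := (1 - ε)⁻¹ • (μ - ε • cycleMeasure γ) with hxdef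
    have hxp : ∀ p, x p = (1 - ε)⁻¹ * μ p - ((1 - ε)⁻¹ * ε) * cycleMeasure γ p := by
      intro p
      simp only [hxdef, Pi.smul_apply, Pi.sub_apply, smul_eq_mul]
      ring
    have hx : memM1s x := by
      refine ⟨fun p => ?_, ?_, fun i => ?_⟩
      · rw [hxp p]
        have h := hεν p
        have h2 : (0 : ℝ) ≤ (1 - ε)⁻¹ := by positivity
        nlinarith [mul_nonneg h2 (sub_nonneg.2 h)]
      · rw [Finset.sum_congr rfl (fun p _ => hxp p), Finset.sum_sub_distrib,
          ← Finset.mul_sum, ← Finset.mul_sum, hμ.2.1, hνmem.2.1]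
        field_simp
      · rw [Finset.sum_congr rfl (fun j _ => hxp (i, j)),
          Finset.sum_congr rfl (fun j _ => hxp (j, i)),
          Finset.sum_sub_distrib, Finset.sum_sub_distrib,
          ← Finset.mul_sum, ← Finset.mul_sum, ← Finset.mul_sum, ← Finset.mul_sum,
          hμ.2.2 i, hνmem.2.2 i]
    have hseg : μ ∈ openSegment ℝ x (cycleMeasure γ) := by
      refine ⟨1 - ε, ε, h1ε, hε0, by ring, ?_⟩
      rw [hxdef, smul_smul, mul_inv_cancel₀ (ne_of_gt h1ε), one_smul]
      abel
    exact ((hext x hx _ hνmem hseg).2).symm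
  · rintro ⟨l, γ, hγ, rfl⟩
    refine ⟨cycleMeasure_memM1s hγ, ?_⟩
    rintro x hx y hy ⟨aa, bb, ha, hb, hab, hsum⟩
    have key : ∀ p : T × T, (¬ ∃ m : Fin (l + 1), p = (γ m, γ (m + 1))) →
        x p = 0 ∧ y p = 0 := by
      intro p hp
      have h0 : aa * x p + bb * y p = 0 := by
        have h := congrFun hsum p
        simp only [Pi.add_apply, Pi.smul_apply, smul_eq_mul] at h
        rw [h, cm_not_edge hp]
      have hx0 := hx.1 p
      have hy0 := hy.1 p
      constructor <;> nlinarith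
    exact ⟨eq_cycleMeasure hγ hx (fun p hp => (key p hp).1),
      eq_cycleMeasure hγ hy (fun p hp => (key p hp).2)⟩
end

section
/- Suppose $H:(0,\infty)\to\mathbb{R}$ satisfies $\lim_{t\to\infty}\frac{H(ct)-cH(t)}{t}=\rho\, c\log c$ for every $c\in(0,1)$, where $\rho\in(0,\infty)$, and $H$ is nondecreasing and convex. Then $H(n) = \rho n\log(\rho n) - \rho n + o(n)$ as $n\to\infty$ is NOT implied in general; however, the weaker asymptotics $H(n)/ (n\log n) \to \rho$ as $n\to\infty$ holds. -/
open Filter Real in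
lemma stmt12_aux (H : ℝ → ℝ) (ρ : ℝ) (hρ : 0 < ρ)
    (hmono : MonotoneOn H (Set.Ioi (0 : ℝ)))
    (hD : Tendsto (fun t : ℝ => H (2*t) / (2*t) - H t / t) atTop (nhds (ρ * Real.log 2))) :
    Tendsto (fun t : ℝ => H t / (t * Real.log t)) atTop (nhds ρ) := by
  set L : ℝ → ℝ := fun t => H t / t with hLdef
  have hlog2 : (0:ℝ) < Real.log 2 := Real.log_pos one_lt_two
  have main : ∀ ε > (0:ℝ), ∃ N, ∀ s ≥ N, |L s / Real.log s - ρ| ≤ ε := by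
    intro ε hε
    have hε' : 0 < ε * Real.log 2 / 2 := by positivity
    set ε' := ε * Real.log 2 / 2 with hε'def
    obtain ⟨T₀, hT₀⟩ := (Metric.tendsto_atTop.mp hD) ε' hε'
    set T := max T₀ 2 with hTdef
    have hT2 : (2:ℝ) ≤ T := le_max_right _ _
    have hTpos : (0:ℝ) < T := by linarith
    have hstep : ∀ t, T ≤ t → |L (2*t) - L t - ρ * Real.log 2| ≤ ε' := by
      intro t ht
      have := hT₀ t (le_trans (le_max_left _ _) ht)
      rw [Real.dist_eq] at this
      exact le_of_lt this
    set M := (|H T| + |H (2*T)|) / T with hMdef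
    have hLbound : ∀ t, T ≤ t → t ≤ 2*T → |L t| ≤ M := by
      intro t h1 h2
      have ht0 : (0:ℝ) < t := lt_of_lt_of_le hTpos h1
      have hHt : |H t| ≤ |H T| + |H (2*T)| := by
        have l1 : H T ≤ H t := hmono (Set.mem_Ioi.mpr hTpos) (Set.mem_Ioi.mpr ht0) h1
        have l2 : H t ≤ H (2*T) := hmono (Set.mem_Ioi.mpr ht0)
          (Set.mem_Ioi.mpr (by linarith)) h2
        have b1 := neg_abs_le (H T)
        have b2 := le_abs_self (H (2*T))
        have b3 := abs_nonneg (H T)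
        have b4 := abs_nonneg (H (2*T))
        rw [abs_le]; constructor <;> linarith
      have : |L t| = |H t| / t := by
        rw [hLdef]; simp [abs_div, abs_of_pos ht0]
      rw [this, hMdef]
      gcongr
    have hiter : ∀ n : ℕ, ∀ t, T ≤ t →
        |L (2^n * t) - L t - n * (ρ * Real.log 2)| ≤ n * ε' := by
      intro n
      induction n with
      | zero => intro t ht; simp
      | succ n ih =>
        intro t ht
        have ht0 : (0:ℝ) < t := lt_of_lt_of_le hTpos ht
        have hpow : (1:ℝ) ≤ 2^n := one_le_pow₀ (by norm_num)
        have h1 : T ≤ 2^n * t := le_trans ht (le_mul_of_one_le_left ht0.le hpow)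
        have e : L (2^(n+1) * t) - L t - (n+1 : ℕ) * (ρ * Real.log 2)
            = (L (2*(2^n*t)) - L (2^n*t) - ρ*Real.log 2)
              + (L (2^n*t) - L t - (n:ℕ) * (ρ*Real.log 2)) := by
          rw [show (2:ℝ)^(n+1) * t = 2*(2^n*t) by ring]
          push_cast; ring
        rw [e]
        have A := hstep _ h1
        have B := ih t ht
        calc |_ + _| ≤ _ + _ := abs_add_le _ _
          _ ≤ ε' + n * ε' := add_le_add A B
          _ = (n+1 : ℕ) * ε' := by push_cast; ring
    refine ⟨max (2*T) (Real.exp (max 1 ((M + ρ * Real.log (2*T)) * 2 / ε))), fun s hs => ?_⟩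
    have hs1 : 2*T ≤ s := le_trans (le_max_left _ _) hs
    have hs0 : (0:ℝ) < s := by linarith
    have hmaxlog : max 1 ((M + ρ * Real.log (2*T)) * 2 / ε) ≤ Real.log s :=
      (Real.le_log_iff_exp_le hs0).mpr (le_trans (le_max_right _ _) hs)
    have hlogs1 : (1:ℝ) ≤ Real.log s := le_trans (le_max_left _ _) hmaxlog
    have hlogs : (M + ρ * Real.log (2*T)) * 2 / ε ≤ Real.log s :=
      le_trans (le_max_right _ _) hmaxlog
    have hlogs0 : (0:ℝ) < Real.log s := by linarith
    -- decompose s = 2^n * t with t ∈ [T, 2T]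
    set r := s / T with hrdef
    have hr2 : (2:ℝ) ≤ r := by rw [hrdef, le_div_iff₀ hTpos]; linarith
    have hr0 : (0:ℝ) < r := by linarith
    have hlogbr0 : 0 ≤ Real.logb 2 r := Real.logb_nonneg one_lt_two (by linarith)
    set n := ⌊Real.logb 2 r⌋₊ with hndef
    have hfl1 : (n:ℝ) ≤ Real.logb 2 r := Nat.floor_le hlogbr0
    have hfl2 : Real.logb 2 r < n + 1 := Nat.lt_floor_add_one _
    have hpow1 : (2:ℝ)^n ≤ r := by
      have := Real.rpow_le_rpow_of_exponent_le one_le_two hfl1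
      rwa [Real.rpow_natCast, Real.rpow_logb two_pos (by norm_num) hr0] at this
    have hpow2 : r < (2:ℝ)^(n+1) := by
      have := Real.rpow_lt_rpow_of_exponent_lt one_lt_two hfl2
      rw [Real.rpow_logb two_pos (by norm_num) hr0] at this
      calc r < (2:ℝ) ^ ((n:ℝ)+1) := this
        _ = (2:ℝ)^(n+1) := by
          rw [show ((n:ℝ)+1) = ((n+1 : ℕ) : ℝ) by push_cast; ring, Real.rpow_natCast]
    have hp0 : (0:ℝ) < 2^n := pow_pos two_pos n
    set t := s / 2^n with htdef
    have ht0 : (0:ℝ) < t := div_pos hs0 hp0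
    have ht1 : T ≤ t := by
      rw [htdef, le_div_iff₀ hp0]
      have : (2:ℝ)^n * T ≤ r * T := by nlinarith
      rw [hrdef] at this
      calc T * 2^n = 2^n * T := by ring
        _ ≤ s / T * T := this
        _ = s := by field_simp
    have ht2 : t ≤ 2*T := by
      rw [htdef, div_le_iff₀ hp0]
      have h2 : s < (2:ℝ)^(n+1) * T := by
        have := (div_lt_iff₀ hTpos).mp (hrdef ▸ hpow2)
        linarith
      have hpe : (2:ℝ)^(n+1) * T = 2*T*2^n := by rw [pow_succ]; ring
      linarith [hpe ▸ h2]
    have hst : (2:ℝ)^n * t = s := by rw [htdef]; field_simp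
    have hlogdec : Real.log s = n * Real.log 2 + Real.log t := by
      rw [← hst, Real.log_mul (ne_of_gt hp0) (ne_of_gt ht0), Real.log_pow]
    have hlt1 : Real.log T ≤ Real.log t := Real.log_le_log hTpos ht1
    have hlt2 : Real.log t ≤ Real.log (2*T) := Real.log_le_log ht0 ht2
    have hlogT : (0:ℝ) < Real.log T := Real.log_pos (by linarith)
    have A : |L s - L t - n * (ρ * Real.log 2)| ≤ n * ε' := by
      have := hiter n t ht1
      rwa [hst] at this
    have B := hLbound t ht1 ht2
    have habs : |L s - ρ * Real.log s| ≤ n * ε' + M + ρ * Real.log (2*T) := by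
      have e : L s - ρ * Real.log s
          = (L s - L t - n * (ρ * Real.log 2)) + L t - ρ * Real.log t := by
        rw [hlogdec]; ring
      rw [e]
      have hlogt0 : 0 < Real.log t := lt_of_lt_of_le hlogT hlt1
      have C : |ρ * Real.log t| ≤ ρ * Real.log (2*T) := by
        rw [abs_of_pos (mul_pos hρ hlogt0)]
        exact mul_le_mul_of_nonneg_left hlt2 hρ.le
      have tri : ∀ a b c : ℝ, |a + b - c| ≤ |a| + |b| + |c| := by
        intro a b c
        calc |a + b - c| = |a + b + (-c)| := by ring_nf
          _ ≤ |a + b| + |(-c)| := abs_add_le _ _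
          _ ≤ |a| + |b| + |c| := by
              rw [abs_neg]; exact add_le_add_left (abs_add_le a b) _
      have := tri (L s - L t - n * (ρ * Real.log 2)) (L t) (ρ * Real.log t)
      linarith
    have hn : (n:ℝ) * Real.log 2 ≤ Real.log s := by
      rw [hlogdec]
      have := lt_of_lt_of_le hlogT hlt1
      linarith
    have key : |L s - ρ * Real.log s| ≤ ε * Real.log s := by
      have h1 : (n:ℝ) * ε' ≤ Real.log s * (ε/2) := by
        rw [hε'def]
        have h := mul_le_mul_of_nonneg_right hn (le_of_lt (half_pos hε))
        calc (n:ℝ) * (ε * Real.log 2 / 2) = ((n:ℝ) * Real.log 2) * (ε/2) := by ring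
          _ ≤ Real.log s * (ε/2) := h
      have h2 : M + ρ * Real.log (2*T) ≤ ε/2 * Real.log s := by
        have := mul_le_mul_of_nonneg_left hlogs (le_of_lt (by positivity : (0:ℝ) < ε/2))
        rw [mul_div_assoc] at this
        calc M + ρ * Real.log (2*T) = ε/2 * ((M + ρ * Real.log (2*T)) * (2/ε)) := by
              field_simp
          _ ≤ ε/2 * Real.log s := this
      linarith
    have heqq : L s / Real.log s - ρ = (L s - ρ * Real.log s) / Real.log s := by
      field_simp
    rw [heqq, abs_div, abs_of_pos hlogs0, div_le_iff₀ hlogs0]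
    linarith
  rw [Metric.tendsto_atTop]
  intro ε hε
  obtain ⟨N, hN⟩ := main (ε/2) (by linarith)
  refine ⟨max N 2, fun s hs => ?_⟩
  have hs2 : (2:ℝ) ≤ s := le_trans (le_max_right _ _) hs
  have hs0 : (0:ℝ) < s := by linarith
  have := hN s (le_trans (le_max_left _ _) hs)
  rw [Real.dist_eq]
  have heq : H s / (s * Real.log s) = L s / Real.log s := by
    rw [hLdef, div_div]
  rw [heq]
  linarith [this]


open Filter in
/-- If the (convex, nondecreasing) logarithmic moment generating function `H` satisfies
`(H(ct) - c H(t))/t → ρ c log c` as `t → ∞` for every `c ∈ (0,1)`, then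
`H(n)/(n log n) → ρ` as `n → ∞`. -/
theorem stmt12 (H : ℝ → ℝ) (ρ : ℝ) (hρ : 0 < ρ)
    (hconv : ConvexOn ℝ (Set.Ioi (0 : ℝ)) H)
    (hmono : MonotoneOn H (Set.Ioi (0 : ℝ)))
    (hlim : ∀ c ∈ Set.Ioo (0 : ℝ) 1,
      Tendsto (fun t : ℝ => (H (c * t) - c * H t) / t) atTop
        (nhds (ρ * (c * Real.log c)))) :
    Tendsto (fun n : ℕ => H n / (n * Real.log n)) atTop (nhds ρ) := by
  have h := hlim (1/2) ⟨by norm_num, by norm_num⟩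
  have hcomp : Tendsto (fun t : ℝ => 2*t) atTop atTop :=
    tendsto_id.const_mul_atTop (by norm_num : (0:ℝ) < 2)
  have h2 := h.comp hcomp
  have h3 := h2.const_mul (-2 : ℝ)
  have hlimval : (-2 : ℝ) * (ρ * ((1/2) * Real.log (1/2))) = ρ * Real.log 2 := by
    rw [show (1/2 : ℝ) = 2⁻¹ by norm_num, Real.log_inv]; ring
  rw [hlimval] at h3
  have hD : Tendsto (fun t : ℝ => H (2*t) / (2*t) - H t / t) atTop (nhds (ρ * Real.log 2)) := by
    apply h3.congr'
    filter_upwards [eventually_gt_atTop (0:ℝ)] with t ht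
    have h2t : (2:ℝ)*t ≠ 0 := by positivity
    simp only [Function.comp]
    rw [show (1/2 : ℝ) * (2*t) = t by ring]
    field_simp
    ring
  have key := stmt12_aux H ρ hρ hmono hD
  exact key.comp tendsto_natCast_atTop_atTop
end

section
/- Suppose $\rho_{ij}=\rho\geq 1$ for all $(i,j)\in\mathcal{A}$, and let $l_{\min}$ be the girth of the directed graph $(\mathcal{T},\mathcal{A})$ (the minimal length of a simple cycle). Then $\chi(\rho) := \min\{\mathcal{I}(\nu)-\mathcal{S}(\nu) : \nu\in\mathcal{M}_1^{s}(\mathcal{T}^2)\} = \rho\log l_{\min} - \rho\log\rho$, where $\mathcal{S}(\nu)=\rho\sum_{(i,j)\in\mathcal{A}}\nu(i,j)\log\nu(i,j)+\rho\log\rho$ and $\mathcal{I}(\nu)=\sum_{(i,j)\in\mathcal{A}}\nu(i,j)\log\frac{\nu(i,j)}{\overline{\nu}(i)}$ (with $\mathcal{I}(\nu)=\infty$ if $\nu$ charges an edge not in $\mathcal{A}$); moreover the minimizers are exactly the measures $\mu_\gamma$ for simple cycles $\gamma$ of length $l_{\min}$. -/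
open Finset

section
variable {T : Type*} [Fintype T] [DecidableEq T]



private lemma getLast_eq_of_eq {α : Type*} {l₁ l₂ : List α} (h : l₁ = l₂) (h₁ : l₁ ≠ [])
    (h₂ : l₂ ≠ []) : l₁.getLast h₁ = l₂.getLast h₂ := by subst h; rfl

private lemma exists_nodup_chain_aux {α : Type*} (r : α → α → Prop) (n : ℕ) :
    ∀ (l : List α) (a b : α), l.length ≤ n → List.Chain r a l →
      (a :: l).getLast (by simp) = b →
    ∃ l', l'.Sublist l ∧ List.Chain r a l' ∧ (a :: l').getLast (by simp) = b ∧
      (a :: l').Nodup := by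
  induction n with
  | zero =>
    intro l a b hlen hc hb
    rw [Nat.le_zero, List.length_eq_zero_iff] at hlen
    subst hlen
    exact ⟨[], List.Sublist.refl _, List.Chain.nil, hb, by simp⟩
  | succ n IH =>
    intro l a b hlen hc hb
    by_cases ha : a ∈ l
    · obtain ⟨l₁, l₂, rfl⟩ := List.append_of_mem ha
      have hc2 : List.Chain r a l₂ := (List.isChain_cons_split.mp hc).2
      have hb2 : (a :: l₂).getLast (by simp) = b := by
        rw [getLast_eq_of_eq (show a :: (l₁ ++ a :: l₂) = (a :: l₁) ++ (a :: l₂) by simp)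
          (by simp) (by simp), List.getLast_append_of_ne_nil _ (by simp)] at hb
        exact hb
      have hlen2 : l₂.length ≤ n := by
        simp only [List.length_append, List.length_cons] at hlen; omega
      obtain ⟨l', hs, h1, h2, h3⟩ := IH l₂ a b hlen2 hc2 hb2
      refine ⟨l', hs.trans ?_, h1, h2, h3⟩
      exact ((List.sublist_cons_self a l₂).trans (List.sublist_append_right _ _))
    · cases l with
      | nil => exact ⟨[], List.Sublist.refl _, List.Chain.nil, hb, by simp⟩
      | cons c t =>
        replace hc := List.chain_cons.mp hc
        have hb2 : (c :: t).getLast (by simp) = b := by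
          rwa [List.getLast_cons (by simp)] at hb
        have hlen2 : t.length ≤ n := by simp at hlen; omega
        obtain ⟨m, hs, h1, h2, h3⟩ := IH t c b hlen2 hc.2 hb2
        refine ⟨c :: m, hs.cons₂ c, List.chain_cons.mpr ⟨hc.1, h1⟩, ?_, ?_⟩
        · rw [List.getLast_cons (by simp)]; exact h2
        · refine List.nodup_cons.mpr ⟨fun hmem => ha ?_, h3⟩
          exact (hs.cons₂ c).mem hmem

private lemma exists_nodup_chain {α : Type*} {r : α → α → Prop} {l : List α} {a b : α}
    (hc : List.Chain r a l) (hb : (a :: l).getLast (by simp) = b) :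
    ∃ l', l'.Sublist l ∧ List.Chain r a l' ∧ (a :: l').getLast (by simp) = b ∧
      (a :: l').Nodup :=
  exists_nodup_chain_aux r l.length l a b le_rfl hc hb


private theorem List.chain_iff_get {α : Type*} {R : α → α → Prop} {a : α} {l : List α} :
    List.Chain R a l ↔
    (∀ h : 0 < List.length l, R a (List.get l ⟨0, h⟩)) ∧
      ∀ (i : ℕ) (h : i < List.length l - 1),
        R (List.get l ⟨i, by omega⟩) (List.get l ⟨i+1, by omega⟩) := by
  constructor
  · intro h
    have h' := List.isChain_iff_getElem.mp h
    exact ⟨fun h0 => h' 0 (by simp; omega), fun i hi => h' (i+1) (by simp; omega)⟩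
  · rintro ⟨h1, h2⟩
    apply List.isChain_iff_getElem.mpr
    intro i hi
    cases i with
    | zero => exact h1 (by simp at hi; omega)
    | succ i => exact h2 i (by simp at hi; omega)

/-- From a nodup chain `v → … → u` together with an edge `u → v`, build an injective
cyclic function. -/
private lemma cycle_of_chain {α : Type*} {r : α → α → Prop} {v u : α} {l : List α}
    (hc : List.Chain r v l) (hnd : (v :: l).Nodup)
    (hlast : (v :: l).getLast (by simp) = u) (hr : r u v) :
    ∃ γ : Fin (l.length + 1) → α, Function.Injective γ ∧
      (∀ m, r (γ m) (γ (m + 1))) ∧ γ 0 = v ∧ γ (Fin.last l.length) = u := by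
  have hlen : (v :: l).length = l.length + 1 := by simp
  refine ⟨fun m => (v :: l).get (Fin.cast hlen.symm m), ?_, ?_, rfl, ?_⟩
  case refine_3 =>
    show (v :: l).get _ = u
    rw [← hlast, List.getLast_eq_getElem]
    simp [List.get_eq_getElem]
  · exact (List.nodup_iff_injective_get.mp hnd).comp (Fin.cast_injective _)
  · intro m
    show r ((v :: l).get (Fin.cast hlen.symm m)) ((v :: l).get (Fin.cast hlen.symm (m + 1)))
    rcases eq_or_lt_of_le (Nat.lt_succ_iff.mp m.isLt) with hm | hm
    · have h1 : ((m + 1 : Fin (l.length + 1)) : ℕ) = 0 := by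
        simp [Fin.add_def, hm]
      have h2 : (v :: l).get (Fin.cast hlen.symm (m + 1)) = v := by
        have : Fin.cast hlen.symm (m + 1) = ⟨0, by simp⟩ := by
          ext; simpa using h1
        rw [this]; rfl
      have h3 : (v :: l).get (Fin.cast hlen.symm m) = u := by
        rw [← hlast, List.getLast_eq_getElem]
        congr 1
        ext; simpa using hm
      rw [h2, h3]; exact hr
    · have h1 : ((m + 1 : Fin (l.length + 1)) : ℕ) = (m : ℕ) + 1 := by
        simp [Fin.add_def, Nat.mod_eq_of_lt (by omega : (m : ℕ) + 1 < l.length + 1)]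
      have := (List.chain_iff_get.mp hc).2
      rcases Nat.eq_zero_or_pos (m : ℕ) with h0 | h0
      · have := (List.chain_iff_get.mp hc).1 (by omega)
        have e1 : (v :: l).get (Fin.cast hlen.symm m) = v := by
          have : Fin.cast hlen.symm m = ⟨0, by simp⟩ := by ext; simpa using h0
          rw [this]; rfl
        have e2 : (v :: l).get (Fin.cast hlen.symm (m + 1)) = l.get ⟨0, by omega⟩ := by
          have : Fin.cast hlen.symm (m + 1) = ⟨1, by omega⟩ := by ext; simp [h1, h0]
          rw [this]; rfl
        rw [e1, e2]; exact this
      · have key := this ((m : ℕ) - 1) (by omega)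
        have e1 : (v :: l).get (Fin.cast hlen.symm m) = l.get ⟨(m : ℕ) - 1, by omega⟩ := by
          have : Fin.cast hlen.symm m = ⟨((m : ℕ) - 1) + 1, by omega⟩ := by
            ext; simp; omega
          rw [this]; rfl
        have e2 : (v :: l).get (Fin.cast hlen.symm (m + 1)) =
            l.get ⟨(m : ℕ) - 1 + 1, by omega⟩ := by
          have : Fin.cast hlen.symm (m + 1) = ⟨((m : ℕ) - 1 + 1) + 1, by omega⟩ := by
            ext; simp [h1]; omega
          rw [this]; rfl
        rw [e1, e2]; exact key

private lemma cycle_rotate {α : Type*} {r : α → α → Prop} {n : ℕ} {γ : Fin (n + 1) → α}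
    (hinj : Function.Injective γ) (hedge : ∀ m, r (γ m) (γ (m + 1))) (c : Fin (n + 1)) :
    ∃ δ : Fin (n + 1) → α, Function.Injective δ ∧ (∀ m, r (δ m) (δ (m + 1))) ∧
      δ 0 = γ c ∧ δ 1 = γ (c + 1) := by
  refine ⟨fun m => γ (c + m), hinj.comp fun a b hab => by
    simpa using add_left_cancel hab, fun m => ?_, by simp, by simp⟩
  have : c + (m + 1) = (c + m) + 1 := by rw [add_assoc]
  simpa [this] using hedge (c + m)

/-- Any chain from `v` to `i` plus an edge `i → v` yields a simple cycle of
length at most `l.length + 1`. -/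
private lemma exists_cycle_of_chain {α : Type*} {r : α → α → Prop} {v i : α} {l : List α}
    (hc : List.Chain r v l) (hlast : (v :: l).getLast (by simp) = i) (hr : r i v) :
    ∃ n, n ≤ l.length ∧ ∃ γ : Fin (n + 1) → α, Function.Injective γ ∧
      ∀ m, r (γ m) (γ (m + 1)) := by
  obtain ⟨l', hs, hc', hlast', hnd'⟩ := exists_nodup_chain hc hlast
  obtain ⟨γ, h1, h2, _, _⟩ := cycle_of_chain hc' hnd' hlast' hr
  exact ⟨l'.length, hs.length_le, γ, h1, h2⟩

/-- From reachability `v ⇝ u` and an edge `u → v`, a simple cycle through the edge,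
with `γ 0 = u`, `γ 1 = v`. -/
private lemma exists_cycle_through_edge {α : Type*} {r : α → α → Prop} {u v : α}
    (hreach : Relation.ReflTransGen r v u) (hr : r u v) :
    ∃ (n : ℕ) (γ : Fin (n + 1) → α), Function.Injective γ ∧
      (∀ m, r (γ m) (γ (m + 1))) ∧ γ 0 = u ∧ γ 1 = v := by
  obtain ⟨l, hc, hlast⟩ := List.exists_isChain_cons_of_relationReflTransGen hreach
  obtain ⟨l', hs, hc', hlast', hnd'⟩ := exists_nodup_chain hc hlast
  obtain ⟨γ, h1, h2, h3, h4⟩ := cycle_of_chain hc' hnd' hlast' hr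
  obtain ⟨δ, d1, d2, d3, d4⟩ := cycle_rotate h1 h2 (Fin.last _)
  refine ⟨l'.length, δ, d1, d2, by rw [d3, h4], by rw [d4]; simpa using h3⟩



private lemma rowsum_le (A : Finset (T × T)) (l₀ : ℕ)
    (hgirth₂ : ∀ (l : ℕ) (γ : Fin (l + 1) → T), Function.Injective γ →
      (∀ m, (γ m, γ (m + 1)) ∈ A) → l₀ ≤ l)
    (ν : T × T → ℝ) (hpos : ∀ p, 0 ≤ ν p) (hsum : ∑ p : T × T, ν p = 1)
    (hstat : ∀ i : T, ∑ j, ν (i, j) = ∑ j, ν (j, i)) (hsupp : ∀ p ∉ A, ν p = 0) (i : T) :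
    ((l₀ : ℝ) + 1) * ∑ j, ν (i, j) ≤ 1 := by
  classical
  set r : T → T → Prop := fun a b => (a, b) ∈ A with hr
  set Rk : ℕ → T → Prop := fun k v =>
    ∃ l : List T, List.Chain r v l ∧ (v :: l).getLast (by simp) = i ∧ l.length ≤ k with hRk
  set φ : T → ℕ := fun v => if h : ∃ k, Rk k v then min (Nat.find h) l₀ else l₀ with hφ
  have hφle : ∀ v, φ v ≤ l₀ := by
    intro v; rw [hφ]; dsimp only; split <;> omega
  have h0 : φ i = 0 := by
    have hex : ∃ k, Rk k i := ⟨0, [], List.Chain.nil, rfl, by simp⟩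
    have : Nat.find hex ≤ 0 := Nat.find_le ⟨[], List.Chain.nil, rfl, by simp⟩
    rw [hφ]; dsimp only; rw [dif_pos hex]; omega
  have hstep : ∀ a b, (a, b) ∈ A → φ a ≤ φ b + 1 := by
    intro a b hab
    by_cases hb : ∃ k, Rk k b
    · obtain ⟨l, hc, hl, hlen⟩ := Nat.find_spec hb
      have hRa : Rk (Nat.find hb + 1) a :=
        ⟨b :: l, List.chain_cons.mpr ⟨hab, hc⟩,
          by rw [List.getLast_cons (by simp)]; exact hl, by simpa using hlen⟩
      have hea : ∃ k, Rk k a := ⟨_, hRa⟩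
      have h1 : Nat.find hea ≤ Nat.find hb + 1 := Nat.find_le hRa
      rw [hφ]; dsimp only; rw [dif_pos hea, dif_pos hb]; omega
    · have : φ b = l₀ := by rw [hφ]; dsimp only; rw [dif_neg hb]
      have := hφle a; omega
  have htarget : ∀ b, (i, b) ∈ A → φ b = l₀ := by
    intro b hib
    by_contra hne
    have hlt : φ b < l₀ := lt_of_le_of_ne (hφle b) hne
    have hb : ∃ k, Rk k b := by
      by_contra h
      rw [hφ] at hlt; dsimp only at hlt; rw [dif_neg h] at hlt; omega
    have hfind : Nat.find hb < l₀ := by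
      rw [hφ] at hlt; dsimp only at hlt; rw [dif_pos hb] at hlt; omega
    obtain ⟨l, hc, hl, hlen⟩ := Nat.find_spec hb
    obtain ⟨n, hn, γ, hinj, hedge⟩ := exists_cycle_of_chain hc hl hib
    have := hgirth₂ n γ hinj hedge
    omega
  -- per-edge inequality
  have hedge_ineq : ∀ p ∈ A,
      ((l₀ : ℝ) + 1) * (if p.1 = i then ν p else 0) ≤
        ν p * (1 + (φ p.2 : ℝ) - (φ p.1 : ℝ)) := by
    rintro ⟨a, b⟩ hp
    dsimp only
    by_cases ha : a = i
    · subst ha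
      rw [if_pos rfl, htarget b hp, h0]
      rw [Nat.cast_zero]
      nlinarith [hpos (a, b)]
    · rw [if_neg ha]
      have h1 : (φ a : ℝ) ≤ (φ b : ℝ) + 1 := by exact_mod_cast hstep a b hp
      nlinarith [hpos (a, b)]
  -- sum the inequality
  have hLHS : ∑ p ∈ A, ((l₀ : ℝ) + 1) * (if p.1 = i then ν p else 0) =
      ((l₀ : ℝ) + 1) * ∑ j, ν (i, j) := by
    rw [← Finset.mul_sum]
    congr 1
    have hz1 : ∀ p ∈ (univ : Finset (T × T)), p ∉ A →
        (if p.1 = i then ν p else 0) = 0 := by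
      intro p _ hp; rw [hsupp p hp]; simp
    rw [Finset.sum_subset (Finset.subset_univ A) hz1]
    rw [Fintype.sum_prod_type]
    rw [Finset.sum_eq_single i]
    · simp
    · intro a _ ha; simp [ha]
    · simp
  have hRHS : ∑ p ∈ A, ν p * (1 + (φ p.2 : ℝ) - (φ p.1 : ℝ)) = 1 := by
    have hz2 : ∀ p ∈ (univ : Finset (T × T)), p ∉ A →
        ν p * (1 + (φ p.2 : ℝ) - (φ p.1 : ℝ)) = 0 := by
      intro p _ hp; rw [hsupp p hp]; ring
    rw [Finset.sum_subset (Finset.subset_univ A) hz2]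
    have expand : ∀ p : T × T, ν p * (1 + (φ p.2 : ℝ) - (φ p.1 : ℝ)) =
        ν p + ν p * (φ p.2 : ℝ) - ν p * (φ p.1 : ℝ) := by intro p; ring
    simp only [expand]
    rw [Finset.sum_sub_distrib, Finset.sum_add_distrib]
    have e2 : ∑ p : T × T, ν p * (φ p.2 : ℝ) = ∑ p : T × T, ν p * (φ p.1 : ℝ) := by
      rw [Fintype.sum_prod_type_right]
      conv_rhs => rw [Fintype.sum_prod_type]
      simp only [← Finset.sum_mul]
      exact Finset.sum_congr rfl fun b _ => by rw [← hstat b]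
    rw [e2, hsum]; ring
  calc ((l₀ : ℝ) + 1) * ∑ j, ν (i, j)
      = ∑ p ∈ A, ((l₀ : ℝ) + 1) * (if p.1 = i then ν p else 0) := hLHS.symm
    _ ≤ ∑ p ∈ A, ν p * (1 + (φ p.2 : ℝ) - (φ p.1 : ℝ)) := Finset.sum_le_sum hedge_ineq
    _ = 1 := hRHS



private lemma analytic_bound (A : Finset (T × T)) (l₀ : ℕ)
    (hgirth₂ : ∀ (l : ℕ) (γ : Fin (l + 1) → T), Function.Injective γ →
      (∀ m, (γ m, γ (m + 1)) ∈ A) → l₀ ≤ l)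
    (ρ : ℝ) (hρ : 1 ≤ ρ)
    (ν : T × T → ℝ) (hpos : ∀ p, 0 ≤ ν p) (hsum : ∑ p : T × T, ν p = 1)
    (hstat : ∀ i : T, ∑ j, ν (i, j) = ∑ j, ν (j, i)) (hsupp : ∀ p ∉ A, ν p = 0) :
    ρ * Real.log ((l₀ : ℝ) + 1) - ρ * Real.log ρ ≤
      (∑ p ∈ A, ν p * Real.log (ν p / ∑ k : T, ν (p.1, k))) -
        (ρ * ∑ p ∈ A, ν p * Real.log (ν p) + ρ * Real.log ρ) ∧
    ((∑ p ∈ A, ν p * Real.log (ν p / ∑ k : T, ν (p.1, k))) -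
        (ρ * ∑ p ∈ A, ν p * Real.log (ν p) + ρ * Real.log ρ) =
        ρ * Real.log ((l₀ : ℝ) + 1) - ρ * Real.log ρ →
      ∀ a : T, 0 < ∑ j, ν (a, j) → ∑ j, ν (a, j) = (((l₀ : ℝ) + 1))⁻¹) := by
  set L : ℝ := (l₀ : ℝ) + 1 with hLdef
  have hL : 0 < L := by positivity
  set nb : T → ℝ := fun a => ∑ j, ν (a, j) with hnb
  have hnbpos : ∀ a, 0 ≤ nb a := fun a => Finset.sum_nonneg fun j _ => hpos _
  have hnble : ∀ a, nb a ≤ L⁻¹ := by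
    intro a
    have h1 := rowsum_le A l₀ hgirth₂ ν hpos hsum hstat hsupp a
    rw [← one_div, le_div_iff₀ hL, mul_comm]
    exact h1
  have hle : ∀ p : T × T, ν p ≤ nb p.1 := by
    intro p
    have : ν (p.1, p.2) ≤ nb p.1 :=
      Finset.single_le_sum (fun j _ => hpos (p.1, j)) (mem_univ p.2)
    simpa using this
  have hnbsum : ∑ a, nb a = 1 := by rw [hnb, ← Fintype.sum_prod_type]; exact hsum
  set Sν : ℝ := ∑ p ∈ A, ν p * Real.log (ν p) with hSν
  set SbA : ℝ := ∑ p ∈ A, ν p * Real.log (nb p.1) with hSbA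
  have I_eq : ∑ p ∈ A, ν p * Real.log (ν p / nb p.1) = Sν - SbA := by
    rw [hSν, hSbA, ← Finset.sum_sub_distrib]
    refine Finset.sum_congr rfl fun p _ => ?_
    rcases eq_or_lt_of_le (hpos p) with h0 | h0
    · simp [← h0]
    · have hnb0 : nb p.1 ≠ 0 := ne_of_gt (lt_of_lt_of_le h0 (hle p))
      rw [Real.log_div (ne_of_gt h0) hnb0]; ring
  have SbA_eq : SbA = ∑ a, nb a * Real.log (nb a) := by
    rw [hSbA]
    have hz : ∀ p ∈ (univ : Finset (T × T)), p ∉ A → ν p * Real.log (nb p.1) = 0 := by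
      intro p _ hp; rw [hsupp p hp]; ring
    rw [Finset.sum_subset (Finset.subset_univ A) hz, Fintype.sum_prod_type]
    refine Finset.sum_congr rfl fun a _ => ?_
    show (∑ y, ν (a, y) * Real.log (nb a)) = _
    rw [← Finset.sum_mul]
  have hAB : Sν ≤ SbA := by
    refine Finset.sum_le_sum fun p _ => ?_
    rcases eq_or_lt_of_le (hpos p) with h0 | h0
    · rw [← h0]; simp
    · exact mul_le_mul_of_nonneg_left (Real.log_le_log h0 (hle p)) (le_of_lt h0)
  have hBC : SbA ≤ -Real.log L := by
    rw [SbA_eq]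
    calc ∑ a, nb a * Real.log (nb a) ≤ ∑ a, nb a * Real.log L⁻¹ := by
          refine Finset.sum_le_sum fun a _ => ?_
          rcases eq_or_lt_of_le (hnbpos a) with h0 | h0
          · rw [← h0]; simp
          · exact mul_le_mul_of_nonneg_left (Real.log_le_log h0 (hnble a)) (le_of_lt h0)
      _ = -Real.log L := by rw [← Finset.sum_mul, hnbsum, one_mul, Real.log_inv]
  constructor
  · rw [show (∑ p ∈ A, ν p * Real.log (ν p / ∑ k, ν (p.1, k))) = Sν - SbA from I_eq]
    have hρ0 : (0:ℝ) ≤ ρ := by linarith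
    nlinarith [mul_nonneg (by linarith : (0:ℝ) ≤ ρ - 1) (by linarith : 0 ≤ SbA - Sν),
      mul_nonneg hρ0 (by linarith : 0 ≤ -Real.log L - SbA)]
  · intro heq a ha
    rw [show (∑ p ∈ A, ν p * Real.log (ν p / ∑ k, ν (p.1, k))) = Sν - SbA from I_eq] at heq
    have hρ0 : (0:ℝ) < ρ := by linarith
    have hSbAeq : SbA = -Real.log L := by
      nlinarith [mul_nonneg (by linarith : (0:ℝ) ≤ ρ - 1) (by linarith : 0 ≤ SbA - Sν)]
    have hsum0 : ∑ x : T, (nb x * Real.log (nb x) + nb x * Real.log L) = 0 := by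
      rw [Finset.sum_add_distrib, ← SbA_eq, ← Finset.sum_mul, hnbsum, one_mul, hSbAeq]; ring
    have hterm : ∀ x ∈ (univ : Finset T),
        nb x * Real.log (nb x) + nb x * Real.log L ≤ 0 := by
      intro x _
      rcases eq_or_lt_of_le (hnbpos x) with h0 | h0
      · rw [← h0]; simp
      · have := mul_le_mul_of_nonneg_left (Real.log_le_log h0 (hnble x)) (le_of_lt h0)
        rw [Real.log_inv] at this
        linarith
    have hzero := (Finset.sum_eq_zero_iff_of_nonpos hterm).mp hsum0 a (mem_univ a)
    have hlog : Real.log (nb a) = Real.log L⁻¹ := by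
      rw [Real.log_inv]
      have : nb a * (Real.log (nb a) + Real.log L) = 0 := by linarith
      rcases mul_eq_zero.mp this with h | h
      · exact absurd h (ne_of_gt ha)
      · linarith
    have := congrArg Real.exp hlog
    rwa [Real.exp_log ha, Real.exp_log (by positivity)] at this

private lemma cycleMeasure_props (A : Finset (T × T)) (l₀ : ℕ) (γ : Fin (l₀ + 1) → T)
    (hinj : Function.Injective γ) (hA : ∀ m, (γ m, γ (m + 1)) ∈ A) (ρ : ℝ) :
    memM1s (cycleMeasure γ) ∧ (∀ p ∉ A, cycleMeasure γ p = 0) ∧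
      (∑ p ∈ A, cycleMeasure γ p *
          Real.log (cycleMeasure γ p / ∑ k : T, cycleMeasure γ (p.1, k))) -
        (ρ * ∑ p ∈ A, cycleMeasure γ p * Real.log (cycleMeasure γ p) + ρ * Real.log ρ) =
        ρ * Real.log ((l₀ : ℝ) + 1) - ρ * Real.log ρ := by
  classical
  have hLne : ((l₀ : ℝ) + 1) ≠ 0 := by positivity
  set ν : T × T → ℝ := cycleMeasure γ with hνdef
  set E : Finset (T × T) := Finset.image (fun m => (γ m, γ (m + 1))) univ with hE
  have hgeinj : Function.Injective (fun m : Fin (l₀ + 1) => (γ m, γ (m + 1))) := by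
    intro a b hab
    exact hinj (congrArg Prod.fst hab)
  have hν : ∀ p, ν p = if p ∈ E then ((l₀ : ℝ) + 1)⁻¹ else 0 := by
    intro p
    rw [hνdef, cycleMeasure]
    congr 1
    simp only [hE, Finset.mem_image, Finset.mem_univ, true_and, eq_iff_iff]
    exact ⟨fun ⟨m, hm⟩ => ⟨m, hm.symm⟩, fun ⟨m, hm⟩ => ⟨m, hm.symm⟩⟩
  have hEcard : E.card = l₀ + 1 := by
    rw [hE, Finset.card_image_of_injective _ hgeinj, card_univ, Fintype.card_fin]
  have hEA : E ⊆ A := by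
    intro p hp
    rw [hE, Finset.mem_image] at hp
    obtain ⟨m, _, rfl⟩ := hp
    exact hA m
  have hpos : ∀ p, 0 ≤ ν p := by
    intro p; rw [hν]; split
    · positivity
    · exact le_rfl
  have hrow : ∀ m, ∑ k, ν (γ m, k) = ((l₀ : ℝ) + 1)⁻¹ := by
    intro m
    have hch : ∀ k, ((γ m, k) ∈ E) ↔ k = γ (m + 1) := by
      intro k
      simp only [hE, Finset.mem_image, Finset.mem_univ, true_and, Prod.mk.injEq]
      constructor
      · rintro ⟨m', h1, h2⟩; rw [← h2, hinj h1]
      · rintro rfl; exact ⟨m, rfl, rfl⟩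
    simp only [hν, hch]
    rw [Finset.sum_ite_eq' univ (γ (m + 1)) fun _ => ((l₀ : ℝ) + 1)⁻¹]
    simp
  have hrow0 : ∀ a, (∀ m, γ m ≠ a) → ∑ k, ν (a, k) = 0 := by
    intro a ha
    refine Finset.sum_eq_zero fun k _ => ?_
    rw [hν, if_neg]
    intro hk
    rw [hE, Finset.mem_image] at hk
    obtain ⟨m, _, hm⟩ := hk
    exact ha m (congrArg Prod.fst hm)
  have hcol : ∀ m, ∑ k, ν (k, γ m) = ((l₀ : ℝ) + 1)⁻¹ := by
    intro m
    have hch : ∀ k, ((k, γ m) ∈ E) ↔ k = γ (m - 1) := by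
      intro k
      simp only [hE, Finset.mem_image, Finset.mem_univ, true_and, Prod.mk.injEq]
      constructor
      · rintro ⟨m', h1, h2⟩
        have : m' = m - 1 := eq_sub_of_add_eq (hinj h2)
        rw [← h1, this]
      · rintro rfl
        exact ⟨m - 1, rfl, by rw [sub_add_cancel]⟩
    simp only [hν, hch]
    rw [Finset.sum_ite_eq' univ (γ (m - 1)) fun _ => ((l₀ : ℝ) + 1)⁻¹]
    simp
  have hcol0 : ∀ a, (∀ m, γ m ≠ a) → ∑ k, ν (k, a) = 0 := by
    intro a ha
    refine Finset.sum_eq_zero fun k _ => ?_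
    rw [hν, if_neg]
    intro hk
    rw [hE, Finset.mem_image] at hk
    obtain ⟨m, _, hm⟩ := hk
    exact ha (m + 1) (congrArg Prod.snd hm)
  have hsupp : ∀ p ∉ A, ν p = 0 := by
    intro p hp
    rw [hν, if_neg fun hpE => hp (hEA hpE)]
  have htotal : ∑ p : T × T, ν p = 1 := by
    simp only [hν]
    rw [Finset.sum_ite_mem, Finset.univ_inter, Finset.sum_const, hEcard, nsmul_eq_mul]
    push_cast
    rw [mul_inv_cancel₀ hLne]
  have hmem : memM1s ν := by
    refine ⟨hpos, htotal, fun i => ?_⟩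
    by_cases hi : ∃ m, γ m = i
    · obtain ⟨m, rfl⟩ := hi
      rw [hrow m, hcol m]
    · push_neg at hi
      rw [hrow0 i hi, hcol0 i hi]
  refine ⟨hmem, hsupp, ?_⟩
  have hI : ∑ p ∈ A, ν p * Real.log (ν p / ∑ k : T, ν (p.1, k)) = 0 := by
    refine Finset.sum_eq_zero fun p _ => ?_
    by_cases hpE : p ∈ E
    · have h1 : ν p = ((l₀ : ℝ) + 1)⁻¹ := by rw [hν, if_pos hpE]
      have h2 : ∑ k, ν (p.1, k) = ((l₀ : ℝ) + 1)⁻¹ := by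
        rw [hE, Finset.mem_image] at hpE
        obtain ⟨m, _, hm⟩ := hpE
        have : p.1 = γ m := by rw [← hm]
        rw [this, hrow m]
      rw [h1, h2, div_self (by positivity), Real.log_one, mul_zero]
    · rw [hν, if_neg hpE, zero_mul]
  have hS : ∑ p ∈ A, ν p * Real.log (ν p) = -Real.log ((l₀ : ℝ) + 1) := by
    rw [← Finset.sum_subset hEA (fun p _ hpE => by rw [hν, if_neg hpE, zero_mul])]
    have : ∀ p ∈ E, ν p * Real.log (ν p) =
        ((l₀ : ℝ) + 1)⁻¹ * Real.log (((l₀ : ℝ) + 1)⁻¹) := by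
      intro p hp; rw [hν, if_pos hp]
    rw [Finset.sum_congr rfl this, Finset.sum_const, hEcard, nsmul_eq_mul]
    rw [Real.log_inv]
    push_cast
    field_simp
  rw [hI, hS]
  ring
private lemma cycle_cast {α : Type*} [DecidableEq α] {r : α → α → Prop} {n m : ℕ} (h : n = m)
    (γ : Fin (n + 1) → α) (hinj : Function.Injective γ)
    (hedge : ∀ k, r (γ k) (γ (k + 1))) [Fintype α] :
    ∃ δ : Fin (m + 1) → α, Function.Injective δ ∧ (∀ k, r (δ k) (δ (k + 1))) ∧
      δ 0 = γ 0 ∧ δ 1 = γ 1 ∧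
      Finset.image δ Finset.univ = Finset.image γ Finset.univ := by
  subst h
  exact ⟨γ, hinj, hedge, rfl, rfl, rfl⟩

open Fin.NatCast Fin.CommRing in
private lemma equality_case (A : Finset (T × T)) (l₀ : ℕ)
    (hgirth₂ : ∀ (l : ℕ) (γ : Fin (l + 1) → T), Function.Injective γ →
      (∀ m, (γ m, γ (m + 1)) ∈ A) → l₀ ≤ l)
    (ν : T × T → ℝ) (hpos : ∀ p, 0 ≤ ν p) (hsum : ∑ p : T × T, ν p = 1)
    (hstat : ∀ i : T, ∑ j, ν (i, j) = ∑ j, ν (j, i)) (hsupp : ∀ p ∉ A, ν p = 0)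
    (hnb : ∀ a : T, 0 < ∑ j, ν (a, j) → ∑ j, ν (a, j) = (((l₀ : ℝ) + 1))⁻¹) :
    ∃ γ : Fin (l₀ + 1) → T, Function.Injective γ ∧
      (∀ m, (γ m, γ (m + 1)) ∈ A) ∧ ν = cycleMeasure γ := by
  classical
  have hLr : (0:ℝ) < (l₀ : ℝ) + 1 := by positivity
  set nb : T → ℝ := fun a => ∑ j, ν (a, j) with hnbdef
  have hnbpos : ∀ a, 0 ≤ nb a := fun a => Finset.sum_nonneg fun j _ => hpos _
  set r : T → T → Prop := fun a b => 0 < ν (a, b) with hrdef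
  have hrA : ∀ {a b}, r a b → (a, b) ∈ A := by
    intro a b hab
    by_contra h
    have hab' : (0:ℝ) < ν (a, b) := hab
    rw [hsupp _ h] at hab'; exact lt_irrefl 0 hab'
  have hrow : ∀ {a b}, r a b → 0 < nb a := by
    intro a b hab
    exact lt_of_lt_of_le hab (Finset.single_le_sum (fun j _ => hpos (a, j)) (mem_univ b))
  have hcol : ∀ {a b}, r a b → 0 < nb b := by
    intro a b hab
    have : 0 < ∑ j, ν (j, b) :=
      lt_of_lt_of_le hab (Finset.single_le_sum (fun j _ => hpos (j, b)) (mem_univ a))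
    rw [hnbdef]; dsimp only; rw [hstat b]; exact this
  set S : Finset T := univ.filter (fun a => 0 < nb a) with hSdef
  have hmemS : ∀ {a}, a ∈ S ↔ 0 < nb a := by
    intro a; rw [hSdef, Finset.mem_filter]; simp
  have hSnb : ∀ a ∈ S, nb a = ((l₀ : ℝ) + 1)⁻¹ := fun a ha => hnb a (hmemS.mp ha)
  have hScard : S.card = l₀ + 1 := by
    have h1 : ∑ a ∈ S, nb a = 1 := by
      rw [Finset.sum_filter_of_ne (fun a _ ha => ?_)]
      · rw [hnbdef]; dsimp only; rw [← Fintype.sum_prod_type]; exact hsum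
      · rcases lt_or_eq_of_le (hnbpos a) with h | h
        · exact h
        · exact absurd h.symm ha
    rw [Finset.sum_congr rfl hSnb, Finset.sum_const, nsmul_eq_mul] at h1
    have : (S.card : ℝ) = (l₀ : ℝ) + 1 := by
      field_simp at h1
      linarith
    exact_mod_cast this
  -- reachability within the support
  have hreach : ∀ u v, r u v → Relation.ReflTransGen r v u := by
    intro u v huv
    set R : Finset T := univ.filter (fun x => Relation.ReflTransGen r v x) with hRdef
    have hmemR : ∀ {x}, x ∈ R ↔ Relation.ReflTransGen r v x := by
      intro x; rw [hRdef, Finset.mem_filter]; simp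
    have hvR : v ∈ R := hmemR.mpr Relation.ReflTransGen.refl
    have hclosed : ∀ {x y}, x ∈ R → r x y → y ∈ R := by
      intro x y hx hxy
      exact hmemR.mpr ((hmemR.mp hx).tail hxy)
    by_contra hnr
    have huR : u ∉ R := fun h => hnr (hmemR.mp h)
    have key : ∑ x ∈ R, ∑ j, ν (x, j) = ∑ x ∈ R, ∑ j, ν (j, x) :=
      Finset.sum_congr rfl fun x _ => hstat x
    have hout : ∀ x ∈ R, ∑ j, ν (x, j) = ∑ j ∈ R, ν (x, j) := by
      intro x hx
      rw [← Finset.sum_subset (Finset.subset_univ R) (fun j _ hj => ?_)]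
      rcases lt_or_eq_of_le (hpos (x, j)) with h | h
      · exact absurd (hclosed hx h) hj
      · exact h.symm
    have hin : ∀ x ∈ R, ∑ j ∈ R, ν (j, x) ≤ ∑ j, ν (j, x) := by
      intro x _
      exact Finset.sum_le_sum_of_subset_of_nonneg (Finset.subset_univ R)
        (fun j _ _ => hpos (j, x))
    -- the incoming mass from outside R at v is at least ν (u,v) > 0
    have hsplit : ∑ j, ν (j, v) = ∑ j ∈ R, ν (j, v) + ∑ j ∈ Rᶜ, ν (j, v) := by
      rw [← Finset.sum_add_sum_compl R]
    have huv' : ν (u, v) ≤ ∑ j ∈ Rᶜ, ν (j, v) :=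
      Finset.single_le_sum (fun j _ => hpos (j, v)) (Finset.mem_compl.mpr huR)
    have hRR : ∑ x ∈ R, ∑ j ∈ R, ν (x, j) = ∑ x ∈ R, ∑ j ∈ R, ν (j, x) :=
      Finset.sum_comm
    have hge : ∑ x ∈ R, ∑ j, ν (j, x) ≥ ∑ x ∈ R, ∑ j ∈ R, ν (j, x) + ν (u, v) := by
      have h1 : ∑ x ∈ R, ∑ j, ν (j, x) =
          ∑ x ∈ R, ∑ j ∈ R, ν (j, x) + ∑ x ∈ R, ∑ j ∈ Rᶜ, ν (j, x) := by
        rw [← Finset.sum_add_distrib]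
        exact Finset.sum_congr rfl fun x _ => by rw [← Finset.sum_add_sum_compl R]
      have h2 : ν (u, v) ≤ ∑ x ∈ R, ∑ j ∈ Rᶜ, ν (j, x) := by
        refine le_trans huv' (Finset.single_le_sum
          (f := fun x => ∑ j ∈ Rᶜ, ν (j, x)) (fun x _ => ?_) hvR)
        exact Finset.sum_nonneg fun j _ => hpos (j, x)
      linarith
    have hlhs : ∑ x ∈ R, ∑ j, ν (x, j) = ∑ x ∈ R, ∑ j ∈ R, ν (x, j) :=
      Finset.sum_congr rfl hout
    rw [hlhs, hRR] at key
    have : (0:ℝ) < ν (u, v) := huv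
    linarith
  -- pick any edge in the support
  have hexists : ∃ p : T × T, 0 < ν p := by
    by_contra h
    push_neg at h
    have : ∑ p : T × T, ν p = 0 :=
      Finset.sum_eq_zero fun p _ => le_antisymm (h p) (hpos p)
    rw [hsum] at this; exact one_ne_zero this
  obtain ⟨⟨u, v⟩, huv⟩ := hexists
  -- a simple cycle through (u, v) inside the support
  have cycle_len : ∀ (n : ℕ) (δ : Fin (n + 1) → T), Function.Injective δ →
      (∀ m, r (δ m) (δ (m + 1))) → n = l₀ ∧ Finset.image δ univ = S := by
    intro n δ hinj hedge
    have h1 : l₀ ≤ n := hgirth₂ n δ hinj fun m => hrA (hedge m)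
    have himg : Finset.image δ univ ⊆ S := by
      intro x hx
      rw [Finset.mem_image] at hx
      obtain ⟨m, _, rfl⟩ := hx
      exact hmemS.mpr (hrow (hedge m))
    have hcard : n + 1 ≤ l₀ + 1 := by
      calc n + 1 = (Finset.image δ univ).card := by
            rw [Finset.card_image_of_injective _ hinj, card_univ, Fintype.card_fin]
        _ ≤ S.card := Finset.card_le_card himg
        _ = l₀ + 1 := hScard
    have hn : n = l₀ := by omega
    subst hn
    refine ⟨rfl, Finset.eq_of_subset_of_card_le himg ?_⟩
    rw [hScard, Finset.card_image_of_injective _ hinj, card_univ, Fintype.card_fin]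
  obtain ⟨n, γ₁, hinj₁, hedge₁, hγ₁0, hγ₁1⟩ := exists_cycle_through_edge (hreach u v huv) huv
  obtain ⟨hn, himg₁⟩ := cycle_len n γ₁ hinj₁ hedge₁
  obtain ⟨γ₀, hinj₀, hedge₀, hc0, hc1, hcimg⟩ := cycle_cast hn γ₁ hinj₁ hedge₁
  have himg₀ : Finset.image γ₀ univ = S := by rw [hcimg]; exact himg₁
  -- uniqueness of successors in the support
  have huniq : ∀ a b c, r a b → r a c → b = c := by
    intro a b c hab hac
    obtain ⟨n', δ₁, hinjδ₁, hedgeδ₁, hδ₁0, hδ₁1⟩ :=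
      exists_cycle_through_edge (hreach a b hab) hab
    obtain ⟨hn', himgδ₁⟩ := cycle_len n' δ₁ hinjδ₁ hedgeδ₁
    obtain ⟨δ, hinjδ, hedgeδ, hd0, hd1, hdimg⟩ := cycle_cast hn' δ₁ hinjδ₁ hedgeδ₁
    have hδ0 : δ 0 = a := by rw [hd0]; exact hδ₁0
    have hδ1 : δ 1 = b := by rw [hd1]; exact hδ₁1
    have himgδ : Finset.image δ univ = S := by rw [hdimg]; exact himgδ₁
    by_cases hl0 : l₀ = 0
    · -- S has one element
      have hbS : b ∈ S := hmemS.mpr (hcol hab)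
      have hcS : c ∈ S := hmemS.mpr (hcol hac)
      have : S.card ≤ 1 := by rw [hScard, hl0]
      exact Finset.card_le_one.mp this b hbS c hcS
    have hcS : c ∈ Finset.image δ univ := himgδ ▸ hmemS.mpr (hcol hac)
    rw [Finset.mem_image] at hcS
    obtain ⟨b', _, hb'⟩ := hcS
    by_contra hbc
    have hb'ne1 : b' ≠ 1 := by
      intro h; rw [h, hδ1] at hb'; exact hbc hb'
    have hb'ne0 : b' ≠ 0 := by
      intro h
      rw [h, hδ0] at hb'
      -- loop a → a
      have hloop : r a a := hb' ▸ hac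
      have : l₀ ≤ 0 := by
        refine hgirth₂ 0 (fun _ => a) (fun x y _ => Fin.ext (by omega)) fun m => ?_
        exact hrA hloop
      omega
    have hb'2 : 2 ≤ b'.val := by
      have hvone : (1 : Fin (l₀ + 1)).val = 1 := by
        rw [Fin.val_one']
        exact Nat.mod_eq_of_lt (by omega)
      have h1 : ¬ (b'.val = (0 : ℕ)) := fun h => hb'ne0 (Fin.ext (by rw [h]; rfl))
      have h2 : ¬ (b'.val = (1 : ℕ)) := fun h => hb'ne1 (Fin.ext (by rw [h, hvone]))
      omega
    set k : ℕ := (l₀ + 1) - b'.val with hk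
    have hkle : k ≤ l₀ - 1 := by have := b'.isLt; omega
    have hk1 : k + 1 ≤ l₀ := by have := b'.isLt; omega
    set ε : Fin (k + 1) → T := fun m => δ (b' + (m.val : Fin (l₀ + 1))) with hε
    have hvalcast : ∀ m : Fin (k + 1), ((m.val : Fin (l₀ + 1)) : ℕ) = m.val := by
      intro m
      rw [Fin.val_natCast]
      exact Nat.mod_eq_of_lt (by omega)
    have hεinj : Function.Injective ε := by
      intro m1 m2 h12
      rw [hε] at h12; dsimp only at h12
      have := add_left_cancel (hinjδ h12)
      have hv : ((m1.val : Fin (l₀ + 1)) : ℕ) = ((m2.val : Fin (l₀ + 1)) : ℕ) := by rw [this]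
      rw [hvalcast m1, hvalcast m2] at hv
      exact Fin.ext hv
    have hεedge : ∀ m, (ε m, ε (m + 1)) ∈ A := by
      intro m
      rcases eq_or_lt_of_le (Nat.lt_succ_iff.mp m.isLt) with hm | hm
      · -- wrap: ε m = δ (b' + k) = δ 0 = a, ε (m+1) = ε 0 = δ b' = c
        have e1 : ε m = a := by
          rw [hε]; dsimp only
          have hbb : b' + (m.val : Fin (l₀ + 1)) = 0 := by
            apply Fin.ext
            have hblt := b'.isLt
            rw [Fin.add_def, Fin.val_natCast,
              Nat.mod_eq_of_lt (by omega : m.val < l₀ + 1), hm]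
            have e : b'.val + k = l₀ + 1 := by omega
            simp only [Fin.val_mk, e, Nat.mod_self, Fin.val_zero]
          rw [hbb, hδ0]
        have e2 : ε (m + 1) = c := by
          have hm1 : (m + 1 : Fin (k + 1)) = 0 := by
            have : m = Fin.last k := Fin.ext (by simpa using hm)
            rw [this, Fin.last_add_one]
          rw [hm1, hε]; dsimp only
          simp only [Fin.val_zero, Nat.cast_zero, add_zero]
          rw [hb']
        rw [e1, e2]
        exact hrA hac
      · have hv : (m + 1 : Fin (k + 1)).val = m.val + 1 :=
          Fin.val_add_one_of_lt (by rw [Fin.lt_def, Fin.val_last]; exact hm)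
        have e2 : ε (m + 1) = δ ((b' + (m.val : Fin (l₀ + 1))) + 1) := by
          rw [hε]; dsimp only
          congr 1
          rw [hv]
          push_cast
          ring
        rw [e2, hε]; dsimp only
        exact hrA (hedgeδ _)
    have := hgirth₂ k ε hεinj hεedge
    omega
  -- conclude ν = cycleMeasure γ₀
  refine ⟨γ₀, hinj₀, fun m => hrA (hedge₀ m), ?_⟩
  funext p
  rw [cycleMeasure]
  by_cases hp : ∃ m, p = (γ₀ m, γ₀ (m + 1))
  · rw [if_pos hp]
    obtain ⟨m, rfl⟩ := hp
    have h1 : nb (γ₀ m) = ((l₀ : ℝ) + 1)⁻¹ := hSnb _ (hmemS.mpr (hrow (hedge₀ m)))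
    have h2 : nb (γ₀ m) = ν (γ₀ m, γ₀ (m + 1)) := by
      rw [hnbdef]; dsimp only
      rw [Finset.sum_eq_single (γ₀ (m + 1))]
      · intro j _ hj
        rcases lt_or_eq_of_le (hpos (γ₀ m, j)) with h | h
        · exact absurd (huniq _ _ _ h (hedge₀ m)) hj
        · exact h.symm
      · intro h; exact absurd (mem_univ _) h
    rw [← h2, h1]
  · rw [if_neg hp]
    by_contra h
    have hppos : 0 < ν p := lt_of_le_of_ne (hpos p) (Ne.symm h)
    have hp1 : p.1 ∈ Finset.image γ₀ univ := himg₀ ▸ hmemS.mpr (hrow (a := p.1) (b := p.2)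
      hppos)
    rw [Finset.mem_image] at hp1
    obtain ⟨m, _, hm⟩ := hp1
    have : p.2 = γ₀ (m + 1) := by
      refine huniq p.1 p.2 (γ₀ (m + 1)) ?_ ?_
      · exact hppos
      · rw [← hm]; exact hedge₀ m
    exact hp ⟨m, by rw [hm, ← this]⟩
end


open Finset in
/-- Constant-`ρ` case of the second-order variational formula.  For `ρ ≥ 1` and a finite
directed graph `(T, A)` with all outdegrees positive and girth `l₀ + 1`, the minimum
over probability measures `ν` with equal marginals supported on `A` of
`I(ν) - S(ν)`, where `S(ν) = ρ ∑_{(i,j)∈A} ν(i,j) log ν(i,j) + ρ log ρ` and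
`I(ν) = ∑_{(i,j)∈A} ν(i,j) log(ν(i,j)/ν̄(i))`, equals `ρ log(l₀+1) - ρ log ρ`, and the
minimizers are exactly the cycle measures `μ_γ` of simple cycles of minimal length. -/
theorem stmt16 {T : Type*} [Fintype T] [DecidableEq T] [Nonempty T]
    (A : Finset (T × T)) (hout : ∀ i : T, ∃ j, (i, j) ∈ A)
    (ρ : ℝ) (hρ : 1 ≤ ρ) (l₀ : ℕ)
    (hgirth₁ : ∃ γ : Fin (l₀ + 1) → T, Function.Injective γ ∧
      ∀ m, (γ m, γ (m + 1)) ∈ A)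
    (hgirth₂ : ∀ (l : ℕ) (γ : Fin (l + 1) → T), Function.Injective γ →
      (∀ m, (γ m, γ (m + 1)) ∈ A) → l₀ ≤ l) :
    IsLeast
      ((fun ν : T × T → ℝ =>
          (∑ p ∈ A, ν p * Real.log (ν p / ∑ k : T, ν (p.1, k))) -
            (ρ * ∑ p ∈ A, ν p * Real.log (ν p) + ρ * Real.log ρ)) ''
        {ν : T × T → ℝ | memM1s ν ∧ ∀ p ∉ A, ν p = 0})
      (ρ * Real.log ((l₀ : ℝ) + 1) - ρ * Real.log ρ) ∧
    ∀ ν : T × T → ℝ, memM1s ν → (∀ p ∉ A, ν p = 0) →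
      ((∑ p ∈ A, ν p * Real.log (ν p / ∑ k : T, ν (p.1, k))) -
          (ρ * ∑ p ∈ A, ν p * Real.log (ν p) + ρ * Real.log ρ) =
        ρ * Real.log ((l₀ : ℝ) + 1) - ρ * Real.log ρ ↔
      ∃ γ : Fin (l₀ + 1) → T, Function.Injective γ ∧
        (∀ m, (γ m, γ (m + 1)) ∈ A) ∧ ν = cycleMeasure γ) := by
  constructor
  · constructor
    · obtain ⟨γ, hinjγ, hAγ⟩ := hgirth₁
      obtain ⟨hmem, hsupp, hval⟩ := cycleMeasure_props A l₀ γ hinjγ hAγ ρ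
      exact ⟨cycleMeasure γ, ⟨hmem, hsupp⟩, hval⟩
    · rintro x ⟨ν, ⟨hmem, hsupp⟩, rfl⟩
      obtain ⟨hpos, hsum, hstat⟩ := hmem
      exact (analytic_bound A l₀ hgirth₂ ρ hρ ν hpos hsum hstat hsupp).1
  · intro ν hmem hsupp
    obtain ⟨hpos, hsum, hstat⟩ := hmem
    constructor
    · intro heq
      have hnb := (analytic_bound A l₀ hgirth₂ ρ hρ ν hpos hsum hstat hsupp).2 heq
      exact equality_case A l₀ hgirth₂ ν hpos hsum hstat hsupp hnb
    · rintro ⟨γ, hinjγ, hAγ, rfl⟩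
      exact (cycleMeasure_props A l₀ γ hinjγ hAγ ρ).2.2
end

section
/- Let $A=(a_{ij})_{i,j\in\mathcal{T}}$ be a matrix with strictly positive entries on a finite set $\mathcal{T}$. Then for every $i$, $\lim_{k\to\infty}\frac{1}{k}\log\sum_j (A^k)_{ij}$ exists, is independent of $i$, and equals $\sup_{\nu\in\mathcal{M}_1^{s}(\mathcal{T}^2)}\big(\sum_{i,j}\nu(i,j)\log a_{ij} - \sum_{i,j}\nu(i,j)\log\frac{\nu(i,j)}{\overline{\nu}(i)}\big)$, where $\overline{\nu}(i)=\sum_j\nu(i,j)$. -/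
open Finset Filter

lemma pf_exists {T : Type*} [Fintype T] [DecidableEq T] [Nonempty T]
    (A : Matrix T T ℝ) (hA : ∀ i j, 0 < A i j) :
    ∃ lam : ℝ, 0 < lam ∧ ∃ r : T → ℝ, (∀ i, 0 < r i) ∧
      ∀ i, ∑ j, A i j * r j = lam * r i := by
  classical
  obtain ⟨pm, -, hpm⟩ := Finset.exists_min_image Finset.univ
    (fun p : T × T => A p.1 p.2) ⟨(Classical.arbitrary T, Classical.arbitrary T), Finset.mem_univ _⟩
  obtain ⟨pM, -, hpM⟩ := Finset.exists_max_image Finset.univ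
    (fun p : T × T => A p.1 p.2) ⟨(Classical.arbitrary T, Classical.arbitrary T), Finset.mem_univ _⟩
  set amin := A pm.1 pm.2 with hamin
  set amax := A pM.1 pM.2 with hamax
  have hminle : ∀ i j, amin ≤ A i j := fun i j => hpm (i, j) (Finset.mem_univ _)
  have hmaxle : ∀ i j, A i j ≤ amax := fun i j => hpM (i, j) (Finset.mem_univ _)
  have haminpos : 0 < amin := hA _ _
  have hamaxpos : 0 < amax := hA _ _
  set n : ℝ := (Fintype.card T : ℝ) with hn
  have hnpos : 0 < n := by
    rw [hn]; exact_mod_cast Fintype.card_pos (α := T)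
  set δ : ℝ := amin / (n * amax) with hδ
  have hδpos : 0 < δ := by positivity
  set C : Set ((T → ℝ) × ℝ) :=
    {x | (∀ i, δ ≤ x.1 i) ∧ (∑ i, x.1 i = 1) ∧ 0 ≤ x.2 ∧
      ∀ i, x.2 * x.1 i ≤ ∑ j, A i j * x.1 j} with hC
  -- C is contained in a compact box
  have hsub : C ⊆ (Set.univ.pi fun _ : T => Set.Icc δ 1) ×ˢ Set.Icc 0 (amax / δ) := by
    rintro ⟨v, t⟩ ⟨h1, h2, h3, h4⟩
    have hv0 : ∀ i, 0 ≤ v i := fun i => le_trans hδpos.le (h1 i)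
    constructor
    · intro i _
      refine ⟨h1 i, ?_⟩
      calc v i ≤ ∑ j, v j := Finset.single_le_sum (fun j _ => hv0 j) (Finset.mem_univ i)
        _ = 1 := h2
    · refine ⟨h3, ?_⟩
      have i := Classical.arbitrary T
      have hAv : ∑ j, A i j * v j ≤ amax := by
        calc ∑ j, A i j * v j ≤ ∑ j, amax * v j :=
            Finset.sum_le_sum fun j _ => mul_le_mul_of_nonneg_right (hmaxle i j) (hv0 j)
          _ = amax * ∑ j, v j := by rw [Finset.mul_sum]
          _ = amax := by rw [h2, mul_one]
      have h5 := (h4 i).trans hAv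
      have h6 : δ ≤ v i := h1 i
      rw [le_div_iff₀ hδpos]
      nlinarith
  have hclosed : IsClosed C := by
    have c1 : ∀ i : T, Continuous fun x : (T → ℝ) × ℝ => x.1 i :=
      fun i => (continuous_apply i).comp continuous_fst
    have hCeq : C = (⋂ i : T, {x : (T → ℝ) × ℝ | δ ≤ x.1 i}) ∩
        ({x : (T → ℝ) × ℝ | ∑ i, x.1 i = 1} ∩ ({x : (T → ℝ) × ℝ | 0 ≤ x.2} ∩
          ⋂ i : T, {x : (T → ℝ) × ℝ | x.2 * x.1 i ≤ ∑ j, A i j * x.1 j})) := by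
      ext x
      simp only [hC, Set.mem_setOf_eq, Set.mem_inter_iff, Set.mem_iInter]
    rw [hCeq]
    refine (isClosed_iInter fun i => isClosed_le continuous_const (c1 i)).inter
      ((isClosed_eq (continuous_finset_sum _ fun i _ => c1 i) continuous_const).inter
        ((isClosed_le continuous_const continuous_snd).inter
          (isClosed_iInter fun i => isClosed_le (continuous_snd.mul (c1 i))
            (continuous_finset_sum _ fun j _ => continuous_const.mul (c1 j)))))
  have hcompact : IsCompact C :=
    ((isCompact_univ_pi fun _ : T => isCompact_Icc).prod isCompact_Icc).of_isClosed_subset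
      hclosed hsub
  have hx0 : ((fun _ : T => n⁻¹, amin) : (T → ℝ) × ℝ) ∈ C := by
    refine ⟨?_, ?_, haminpos.le, ?_⟩
    · intro i
      rw [hδ, div_le_iff₀ (by positivity)]
      rw [inv_mul_cancel_left₀ hnpos.ne']
      exact hminle pM.1 pM.2
    · rw [Finset.sum_const, nsmul_eq_mul, Finset.card_univ, ← hn, mul_inv_cancel₀ hnpos.ne']
    · intro i
      have h1 : amin ≤ ∑ j, A i j :=
        le_trans (hminle i i) (Finset.single_le_sum (fun j _ => (hA i j).le) (Finset.mem_univ i))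
      have h2 : amin * n⁻¹ ≤ (∑ j, A i j) * n⁻¹ :=
        mul_le_mul_of_nonneg_right h1 (by positivity)
      calc amin * n⁻¹ ≤ (∑ j, A i j) * n⁻¹ := h2
        _ = ∑ j, A i j * n⁻¹ := Finset.sum_mul _ _ _
  obtain ⟨x, hxC, hxmax⟩ := hcompact.exists_isMaxOn ⟨_, hx0⟩ continuous_snd.continuousOn
  have hmax : ∀ y ∈ C, y.2 ≤ x.2 := fun y hy => hxmax hy
  obtain ⟨hxδ, hxsum, hxt, hxle⟩ := hxC
  set r := x.1 with hr
  set lam := x.2 with hlamdef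
  have hrpos : ∀ i, 0 < r i := fun i => hδpos.trans_le (hxδ i)
  have hlam : 0 < lam := haminpos.trans_le (hmax _ hx0)
  refine ⟨lam, hlam, r, hrpos, ?_⟩
  by_contra hne
  push_neg at hne
  obtain ⟨i1, hi1⟩ := hne
  have hi1' : lam * r i1 < ∑ j, A i1 j * r j := lt_of_le_of_ne (hxle i1) (fun h => hi1 h.symm)
  set w : T → ℝ := fun i => ∑ j, A i j * r j with hw
  have hwpos : ∀ i, 0 < w i :=
    fun i => Finset.sum_pos (fun j _ => mul_pos (hA i j) (hrpos j)) Finset.univ_nonempty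
  have hkey : ∀ i, lam * w i < ∑ j, A i j * w j := by
    intro i
    have h1 : ∑ j, A i j * w j = ∑ j, A i j * (lam * r j) + ∑ j, A i j * (w j - lam * r j) := by
      rw [← Finset.sum_add_distrib]
      exact Finset.sum_congr rfl fun j _ => by ring
    have h2 : ∑ j, A i j * (lam * r j) = lam * w i := by
      rw [hw, Finset.mul_sum]
      exact Finset.sum_congr rfl fun j _ => by ring
    have h3 : 0 < ∑ j, A i j * (w j - lam * r j) := by
      apply Finset.sum_pos'
      · intro j _; exact mul_nonneg (hA i j).le (sub_nonneg.2 (hxle j))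
      · exact ⟨i1, Finset.mem_univ _, mul_pos (hA i i1) (sub_pos.2 hi1')⟩
    linarith
  set s : ℝ := ∑ i, w i with hs
  have hspos : 0 < s := Finset.sum_pos (fun i _ => hwpos i) Finset.univ_nonempty
  obtain ⟨i2, -, hi2⟩ := Finset.exists_min_image Finset.univ
    (fun i => ∑ j, A i j * w j - lam * w i) ⟨Classical.arbitrary T, Finset.mem_univ _⟩
  set ε : ℝ := ∑ j, A i2 j * w j - lam * w i2 with hε
  have hεpos : 0 < ε := sub_pos.2 (hkey i2)
  have hw_lb : ∀ i, amin ≤ w i := by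
    intro i
    calc amin = amin * ∑ j, r j := by rw [hxsum, mul_one]
      _ = ∑ j, amin * r j := Finset.mul_sum _ _ _
      _ ≤ ∑ j, A i j * r j := Finset.sum_le_sum fun j _ =>
          mul_le_mul_of_nonneg_right (hminle i j) (hrpos j).le
  have hw_ub : ∀ i, w i ≤ amax := by
    intro i
    calc w i ≤ ∑ j, amax * r j := Finset.sum_le_sum fun j _ =>
          mul_le_mul_of_nonneg_right (hmaxle i j) (hrpos j).le
      _ = amax * ∑ j, r j := by rw [Finset.mul_sum]
      _ = amax := by rw [hxsum, mul_one]
  have hs_ub : s ≤ n * amax := by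
    calc s ≤ ∑ _i : T, amax := Finset.sum_le_sum fun i _ => hw_ub i
      _ = n * amax := by rw [Finset.sum_const, nsmul_eq_mul, Finset.card_univ, hn]
  have hmemC : ((fun i => w i / s, lam + ε / s) : (T → ℝ) × ℝ) ∈ C := by
    refine ⟨?_, ?_, by positivity, ?_⟩
    · intro i
      rw [hδ, div_le_div_iff₀ (by positivity) hspos]
      nlinarith [hw_lb i, hs_ub, hwpos i]
    · rw [← Finset.sum_div, div_self hspos.ne']
    · intro i
      have hws : w i ≤ s := Finset.single_le_sum (fun j _ => (hwpos j).le) (Finset.mem_univ i)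
      have h7 : ε / s * w i ≤ ε := by
        rw [div_mul_eq_mul_div, div_le_iff₀ hspos]
        exact mul_le_mul_of_nonneg_left hws hεpos.le
      have h6 : ε ≤ ∑ j, A i j * w j - lam * w i := hi2 i (Finset.mem_univ i)
      have h5 : (lam + ε / s) * w i ≤ ∑ j, A i j * w j := by nlinarith
      calc (lam + ε / s) * (w i / s) = ((lam + ε / s) * w i) / s := by ring
        _ ≤ (∑ j, A i j * w j) / s := by gcongr
        _ = ∑ j, A i j * (w j / s) := by
            rw [Finset.sum_div]
            exact Finset.sum_congr rfl fun j _ => by ring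
  have hcontr := hmax _ hmemC
  simp only at hcontr
  have : 0 < ε / s := div_pos hεpos hspos
  linarith


lemma marg_sum {T : Type*} [Fintype T] (ν : T × T → ℝ)
    (hm : ∀ i : T, ∑ j, ν (i, j) = ∑ j, ν (j, i)) (g : T → ℝ) :
    ∑ p : T × T, ν p * g p.1 = ∑ p : T × T, ν p * g p.2 := by
  rw [Fintype.sum_prod_type, Fintype.sum_prod_type]
  calc ∑ a, ∑ b, ν (a, b) * g a = ∑ a, (∑ b, ν (a, b)) * g a := by
        exact Finset.sum_congr rfl fun a _ => (Finset.sum_mul _ _ _).symm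
    _ = ∑ a, (∑ b, ν (b, a)) * g a := by
        exact Finset.sum_congr rfl fun a _ => by rw [hm a]
    _ = ∑ a, ∑ b, ν (b, a) * g a := by
        exact Finset.sum_congr rfl fun a _ => Finset.sum_mul _ _ _
    _ = ∑ b, ∑ a, ν (b, a) * g a := Finset.sum_comm


open Filter in
/-- For a matrix `A` with strictly positive entries, the limit
`μ(A) = lim_k (1/k) log ∑_j (Aᵏ)_{ij}` exists, does not depend on `i`, and equals the
variational formula
`sup_{ν ∈ M₁ˢ(T²)} ( ∑_{i,j} ν(i,j) log a_{ij} - ∑_{i,j} ν(i,j) log(ν(i,j)/ν̄(i)) )`. -/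
theorem stmt19 {T : Type*} [Fintype T] [DecidableEq T] [Nonempty T]
    (A : Matrix T T ℝ) (hA : ∀ i j, 0 < A i j) :
    ∃ L : ℝ,
      (∀ i : T, Tendsto (fun k : ℕ => Real.log (∑ j : T, (A ^ k) i j) / k)
        atTop (nhds L)) ∧
      IsLUB ((fun ν : T × T → ℝ =>
          ∑ p : T × T, ν p * Real.log (A p.1 p.2) -
            ∑ p : T × T, ν p * Real.log (ν p / ∑ k : T, ν (p.1, k))) ''
        {ν : T × T → ℝ | memM1s ν}) L := by
  classical
  obtain ⟨lam, hlam, r, hr, heig⟩ := pf_exists A hA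
  obtain ⟨lam', hlam', l, hl, heig'⟩ := pf_exists A.transpose (fun i j => hA j i)
  have heigl : ∀ i, ∑ j, A j i * l j = lam' * l i := by
    intro i; simpa [Matrix.transpose_apply] using heig' i
  set Z : ℝ := ∑ i, l i * r i with hZ
  have hZpos : 0 < Z := Finset.sum_pos (fun i _ => mul_pos (hl i) (hr i)) Finset.univ_nonempty
  have hll : lam' = lam := by
    have h1 : ∑ i, l i * (∑ j, A i j * r j) = lam * Z := by
      rw [hZ, Finset.mul_sum]
      exact Finset.sum_congr rfl fun i _ => by rw [heig i]; ring
    have h2 : ∑ i, l i * (∑ j, A i j * r j) = lam' * Z := by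
      calc ∑ i, l i * ∑ j, A i j * r j = ∑ i, ∑ j, l i * (A i j * r j) := by
            exact Finset.sum_congr rfl fun i _ => Finset.mul_sum _ _ _
        _ = ∑ j, ∑ i, l i * (A i j * r j) := Finset.sum_comm
        _ = ∑ j, (∑ i, A i j * l i) * r j := by
            refine Finset.sum_congr rfl fun j _ => ?_
            rw [Finset.sum_mul]
            exact Finset.sum_congr rfl fun i _ => by ring
        _ = ∑ j, (lam' * l j) * r j := by
            exact Finset.sum_congr rfl fun j _ => by rw [heigl j]
        _ = lam' * Z := by
            rw [hZ, Finset.mul_sum]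
            exact Finset.sum_congr rfl fun j _ => by ring
    exact mul_right_cancel₀ hZpos.ne' (h2.symm.trans h1)
  rw [hll] at heigl
  refine ⟨Real.log lam, ?_, ?_⟩
  · -- limits
    intro i
    obtain ⟨im, -, him⟩ := Finset.exists_min_image Finset.univ r ⟨i, Finset.mem_univ _⟩
    obtain ⟨iM, -, hiM⟩ := Finset.exists_max_image Finset.univ r ⟨i, Finset.mem_univ _⟩
    set ρ : ℝ := r im with hρdef
    set R : ℝ := r iM with hRdef
    have hρ : 0 < ρ := hr im
    have hR : 0 < R := hr iM
    have hpow : ∀ k : ℕ, ∀ a, ∑ j, (A ^ k) a j * r j = lam ^ k * r a := by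
      intro k
      induction k with
      | zero => intro a; simp [Matrix.one_apply]
      | succ k ih =>
        intro a
        rw [pow_succ']
        calc ∑ j, (A * A ^ k) a j * r j
            = ∑ j, (∑ m, A a m * (A ^ k) m j) * r j := by
              exact Finset.sum_congr rfl fun j _ => by rw [Matrix.mul_apply]
          _ = ∑ j, ∑ m, A a m * ((A ^ k) m j * r j) := by
              refine Finset.sum_congr rfl fun j _ => ?_
              rw [Finset.sum_mul]
              exact Finset.sum_congr rfl fun m _ => by ring
          _ = ∑ m, ∑ j, A a m * ((A ^ k) m j * r j) := Finset.sum_comm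
          _ = ∑ m, A a m * (lam ^ k * r m) := by
              refine Finset.sum_congr rfl fun m _ => ?_
              rw [← Finset.mul_sum, ih m]
          _ = lam ^ k * ∑ m, A a m * r m := by
              rw [Finset.mul_sum]
              exact Finset.sum_congr rfl fun m _ => by ring
          _ = lam ^ (k + 1) * r a := by rw [heig a]; ring
    have hApow0 : ∀ k : ℕ, ∀ a b, 0 ≤ (A ^ k) a b := by
      intro k
      induction k with
      | zero =>
        intro a b
        rw [pow_zero, Matrix.one_apply]
        split <;> norm_num
      | succ k ih =>
        intro a b
        rw [pow_succ', Matrix.mul_apply]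
        exact Finset.sum_nonneg fun m _ => mul_nonneg (hA a m).le (ih m b)
    set S : ℕ → ℝ := fun k => ∑ j, (A ^ k) i j with hSdef
    have hlb : ∀ k, lam ^ k * (ρ / R) ≤ S k := by
      intro k
      have h1 : lam ^ k * r i ≤ S k * R := by
        calc lam ^ k * r i = ∑ j, (A ^ k) i j * r j := (hpow k i).symm
          _ ≤ ∑ j, (A ^ k) i j * R := Finset.sum_le_sum fun j _ =>
              mul_le_mul_of_nonneg_left (hiM j (Finset.mem_univ _)) (hApow0 k i j)
          _ = S k * R := (Finset.sum_mul _ _ _).symm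
      have h2 : ρ ≤ r i := him i (Finset.mem_univ _)
      rw [show lam ^ k * (ρ / R) = lam ^ k * ρ / R by ring, div_le_iff₀ hR]
      nlinarith [pow_nonneg hlam.le k]
    have hub2 : ∀ k, S k ≤ lam ^ k * (R / ρ) := by
      intro k
      have h1 : S k * ρ ≤ lam ^ k * r i := by
        calc S k * ρ = ∑ j, (A ^ k) i j * ρ := Finset.sum_mul _ _ _
          _ ≤ ∑ j, (A ^ k) i j * r j := Finset.sum_le_sum fun j _ =>
              mul_le_mul_of_nonneg_left (him j (Finset.mem_univ _)) (hApow0 k i j)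
          _ = lam ^ k * r i := hpow k i
      have h2 : r i ≤ R := hiM i (Finset.mem_univ _)
      rw [show lam ^ k * (R / ρ) = lam ^ k * R / ρ by ring, le_div_iff₀ hρ]
      nlinarith [pow_nonneg hlam.le k]
    have hSpos : ∀ k, 0 < S k := fun k => lt_of_lt_of_le (by positivity) (hlb k)
    have hlow : Tendsto (fun k : ℕ => Real.log lam + Real.log (ρ / R) / k) atTop
        (nhds (Real.log lam)) := by
      have h := (tendsto_const_nhds (x := Real.log lam) (f := atTop (α := ℕ))).add
        (tendsto_const_div_atTop_nhds_zero_nat (Real.log (ρ / R)))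
      simpa using h
    have hhigh : Tendsto (fun k : ℕ => Real.log lam + Real.log (R / ρ) / k) atTop
        (nhds (Real.log lam)) := by
      have h := (tendsto_const_nhds (x := Real.log lam) (f := atTop (α := ℕ))).add
        (tendsto_const_div_atTop_nhds_zero_nat (Real.log (R / ρ)))
      simpa using h
    apply tendsto_of_tendsto_of_tendsto_of_le_of_le' hlow hhigh
    · filter_upwards [eventually_ge_atTop 1] with k hk
      have hk0 : (0 : ℝ) < (k : ℝ) := by exact_mod_cast hk
      have h4 : Real.log (lam ^ k * (ρ / R)) ≤ Real.log (S k) :=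
        Real.log_le_log (by positivity) (hlb k)
      rw [Real.log_mul (by positivity) (by positivity), Real.log_pow] at h4
      calc Real.log lam + Real.log (ρ / R) / (k : ℝ)
          = ((k : ℝ) * Real.log lam + Real.log (ρ / R)) / (k : ℝ) := by
            field_simp
        _ ≤ Real.log (S k) / (k : ℝ) := by gcongr
    · filter_upwards [eventually_ge_atTop 1] with k hk
      have hk0 : (0 : ℝ) < (k : ℝ) := by exact_mod_cast hk
      have h4 : Real.log (S k) ≤ Real.log (lam ^ k * (R / ρ)) :=
        Real.log_le_log (hSpos k) (hub2 k)
      rw [Real.log_mul (by positivity) (by positivity), Real.log_pow] at h4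
      calc Real.log (S k) / (k : ℝ) ≤ ((k : ℝ) * Real.log lam + Real.log (R / ρ)) / (k : ℝ) := by
            gcongr
        _ = Real.log lam + Real.log (R / ρ) / (k : ℝ) := by field_simp
  · -- variational formula
    set F : (T × T → ℝ) → ℝ := fun ν =>
      ∑ p : T × T, ν p * Real.log (A p.1 p.2) -
        ∑ p : T × T, ν p * Real.log (ν p / ∑ k : T, ν (p.1, k)) with hF
    -- upper bound
    have hub : ∀ ν, memM1s ν → F ν ≤ Real.log lam := by
      intro ν hν
      obtain ⟨hν0, hν1, hνm⟩ := hν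
      set νb : T → ℝ := fun a => ∑ k, ν (a, k) with hνb
      have hνb0 : ∀ a, 0 ≤ νb a := fun a => Finset.sum_nonneg fun k _ => hν0 _
      have key : ∀ p : T × T,
          ν p * Real.log (A p.1 p.2) - ν p * Real.log (ν p / νb p.1) ≤
          ν p * (Real.log lam + Real.log (r p.1) - Real.log (r p.2)) +
            (A p.1 p.2 * r p.2 / (lam * r p.1) * νb p.1 - ν p) := by
        intro p
        rcases eq_or_lt_of_le (hν0 p) with hp | hp
        · rw [← hp]
          simp only [zero_mul, sub_zero, sub_self, zero_add, zero_sub, neg_zero, sub_zero]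
          have h9 : 0 ≤ A p.1 p.2 * r p.2 / (lam * r p.1) * νb p.1 :=
            mul_nonneg (div_nonneg (mul_nonneg (hA p.1 p.2).le (hr p.2).le)
              (mul_nonneg hlam.le (hr p.1).le)) (hνb0 p.1)
          linarith
        · have hple : ν p ≤ νb p.1 := by
            have : ν (p.1, p.2) ≤ ∑ k, ν (p.1, k) :=
              Finset.single_le_sum (fun k _ => hν0 (p.1, k)) (Finset.mem_univ p.2)
            simpa using this
          have hνbpos : 0 < νb p.1 := lt_of_lt_of_le hp hple
          set x : ℝ := A p.1 p.2 * r p.2 * νb p.1 / (lam * r p.1 * ν p) with hx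
          have hr1 := hr p.1
          have hr2 := hr p.2
          have hA12 := hA p.1 p.2
          have hxpos : 0 < x :=
            div_pos (mul_pos (mul_pos hA12 hr2) hνbpos) (mul_pos (mul_pos hlam hr1) hp)
          have hlogx : Real.log x ≤ x - 1 := Real.log_le_sub_one_of_pos hxpos
          have hlogxeq : Real.log x = Real.log (A p.1 p.2) + Real.log (r p.2) +
              Real.log (νb p.1) - (Real.log lam + Real.log (r p.1) + Real.log (ν p)) := by
            rw [hx, Real.log_div (mul_pos (mul_pos hA12 hr2) hνbpos).ne'
                (mul_pos (mul_pos hlam hr1) hp).ne',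
              Real.log_mul (mul_pos hA12 hr2).ne' hνbpos.ne',
              Real.log_mul hA12.ne' hr2.ne',
              Real.log_mul (mul_pos hlam hr1).ne' hp.ne',
              Real.log_mul hlam.ne' hr1.ne']
          have hid : Real.log (A p.1 p.2) - Real.log (ν p / νb p.1) =
              Real.log lam + Real.log (r p.1) - Real.log (r p.2) + Real.log x := by
            rw [hlogxeq, Real.log_div hp.ne' hνbpos.ne']
            ring
          have hxν : ν p * x = A p.1 p.2 * r p.2 / (lam * r p.1) * νb p.1 := by
            rw [hx]; field_simp
          calc ν p * Real.log (A p.1 p.2) - ν p * Real.log (ν p / νb p.1)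
              = ν p * (Real.log (A p.1 p.2) - Real.log (ν p / νb p.1)) := by ring
            _ = ν p * (Real.log lam + Real.log (r p.1) - Real.log (r p.2) + Real.log x) := by
                rw [hid]
            _ ≤ ν p * (Real.log lam + Real.log (r p.1) - Real.log (r p.2) + (x - 1)) := by
                apply mul_le_mul_of_nonneg_left _ hp.le
                linarith
            _ = ν p * (Real.log lam + Real.log (r p.1) - Real.log (r p.2)) + (ν p * x - ν p) := by
                ring
            _ = _ := by rw [hxν]
      have hsum := Finset.sum_le_sum fun p (_ : p ∈ Finset.univ) => key p
      rw [Finset.sum_sub_distrib] at hsum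
      have hRHS : ∑ p : T × T, (ν p * (Real.log lam + Real.log (r p.1) - Real.log (r p.2)) +
          (A p.1 p.2 * r p.2 / (lam * r p.1) * νb p.1 - ν p)) = Real.log lam := by
        rw [Finset.sum_add_distrib, Finset.sum_sub_distrib]
        have e1 : ∑ p : T × T, ν p * (Real.log lam + Real.log (r p.1) - Real.log (r p.2)) =
            Real.log lam := by
          have : ∀ p : T × T, ν p * (Real.log lam + Real.log (r p.1) - Real.log (r p.2)) =
              ν p * Real.log lam + ν p * Real.log (r p.1) - ν p * Real.log (r p.2) :=
            fun p => by ring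
          rw [Finset.sum_congr rfl fun p _ => this p, Finset.sum_sub_distrib,
            Finset.sum_add_distrib, marg_sum ν hνm (fun a => Real.log (r a)),
            ← Finset.sum_mul, hν1]
          ring
        have e2 : ∑ p : T × T, A p.1 p.2 * r p.2 / (lam * r p.1) * νb p.1 = 1 := by
          rw [Fintype.sum_prod_type]
          have inner : ∀ a, ∑ b, A a b * r b / (lam * r a) * νb a = νb a := by
            intro a
            calc ∑ b, A a b * r b / (lam * r a) * νb a
                = ∑ b, A a b * r b * (νb a / (lam * r a)) := by
                  exact Finset.sum_congr rfl fun b _ => by ring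
              _ = (∑ b, A a b * r b) * (νb a / (lam * r a)) := (Finset.sum_mul _ _ _).symm
              _ = lam * r a * (νb a / (lam * r a)) := by rw [heig a]
              _ = νb a := by
                  rw [mul_comm (lam * r a) (νb a / (lam * r a)),
                    div_mul_cancel₀ _ (mul_pos hlam (hr a)).ne']

          rw [Finset.sum_congr rfl fun a _ => inner a]
          calc ∑ a, νb a = ∑ a, ∑ b, ν (a, b) := rfl
            _ = ∑ p : T × T, ν p := by
                rw [Fintype.sum_prod_type]
            _ = 1 := hν1
        rw [e1, e2, hν1]
        ring
      rw [hRHS] at hsum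
      exact hsum
    -- the maximizer
    set νs : T × T → ℝ := fun p => l p.1 * A p.1 p.2 * r p.2 / (lam * Z) with hνs
    have hνspos : ∀ p, 0 < νs p := fun p => by
      have := hl p.1; have := hr p.2; have := hA p.1 p.2
      positivity
    have hlamne : lam ≠ 0 := hlam.ne'
    have hZne : Z ≠ 0 := hZpos.ne'
    have hrow : ∀ a, ∑ k, νs (a, k) = l a * r a / Z := by
      intro a
      have h1 : ∑ k, νs (a, k) = (∑ k, A a k * r k) * (l a / (lam * Z)) := by
        rw [Finset.sum_mul]
        exact Finset.sum_congr rfl fun k _ => by rw [hνs]; ring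
      rw [h1, heig a]
      field_simp
    have hcol : ∀ a, ∑ k, νs (k, a) = l a * r a / Z := by
      intro a
      have h1 : ∑ k, νs (k, a) = (∑ k, A k a * l k) * (r a / (lam * Z)) := by
        rw [Finset.sum_mul]
        exact Finset.sum_congr rfl fun k _ => by rw [hνs]; ring
      rw [h1, heigl a]
      field_simp
    have hνsmem : memM1s νs := by
      refine ⟨fun p => (hνspos p).le, ?_, fun a => by rw [hrow a, hcol a]⟩
      rw [Fintype.sum_prod_type]
      calc ∑ a, ∑ b, νs (a, b) = ∑ a, l a * r a / Z := by
            exact Finset.sum_congr rfl fun a _ => hrow a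
        _ = (∑ a, l a * r a) / Z := by rw [Finset.sum_div]
        _ = 1 := by rw [← hZ, div_self hZpos.ne']
    have hFνs : F νs = Real.log lam := by
      have hratio : ∀ p : T × T, νs p / (∑ k, νs (p.1, k)) =
          A p.1 p.2 * r p.2 / (lam * r p.1) := by
        intro p
        have hlne : l p.1 ≠ 0 := (hl p.1).ne'
        have hrne : r p.1 ≠ 0 := (hr p.1).ne'
        rw [hrow p.1, hνs]
        field_simp
      have hlogratio : ∀ p : T × T, Real.log (νs p / ∑ k, νs (p.1, k)) =
          Real.log (A p.1 p.2) + Real.log (r p.2) - Real.log lam - Real.log (r p.1) := by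
        intro p
        rw [hratio p, Real.log_div (mul_pos (hA p.1 p.2) (hr p.2)).ne'
            (mul_pos hlam (hr p.1)).ne',
          Real.log_mul (hA p.1 p.2).ne' (hr p.2).ne', Real.log_mul hlam.ne' (hr p.1).ne']
        ring
      have hterm : ∀ p : T × T, νs p * Real.log (A p.1 p.2) -
          νs p * Real.log (νs p / ∑ k, νs (p.1, k)) =
          νs p * Real.log lam + νs p * Real.log (r p.1) - νs p * Real.log (r p.2) := by
        intro p
        rw [hlogratio p]
        ring
      show (∑ p : T × T, νs p * Real.log (A p.1 p.2)) -
          (∑ p : T × T, νs p * Real.log (νs p / ∑ k, νs (p.1, k))) = Real.log lam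
      calc (∑ p : T × T, νs p * Real.log (A p.1 p.2)) -
            (∑ p : T × T, νs p * Real.log (νs p / ∑ k, νs (p.1, k)))
          = ∑ p : T × T, (νs p * Real.log (A p.1 p.2) -
              νs p * Real.log (νs p / ∑ k, νs (p.1, k))) := by rw [Finset.sum_sub_distrib]
        _ = ∑ p : T × T, (νs p * Real.log lam + νs p * Real.log (r p.1) -
              νs p * Real.log (r p.2)) := Finset.sum_congr rfl fun p _ => hterm p
        _ = Real.log lam := by
            rw [Finset.sum_sub_distrib, Finset.sum_add_distrib,
              marg_sum νs hνsmem.2.2 (fun a => Real.log (r a)), ← Finset.sum_mul, hνsmem.2.1]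
            ring
    constructor
    · rintro y ⟨ν, hν, rfl⟩
      exact hub ν hν
    · intro b hb
      have := hb ⟨νs, hνsmem, rfl⟩
      rw [← hFνs]
      exact this
end
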